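/- arXiv:2601.06808 — 5 statements merged into one kernel-verified Lean document; each statement's English description precedes it below -/
import Mathlib

section
/- Let λ > 0 and let μ be a probability measure on [0,∞) whose Laplace transform satisfies ∫_0^∞ e^{−w s} dμ(s) = exp(−∫_0^T w^{α(s)} ds) for every w ≥ 0 (the law at time T of the variable-order stable subordinator). Define the probability measure ν on ℕ by ν({m}) = ∫_0^∞ e^{−λ s}(λ s)^m/m! dμ(s). Then for every u ∈ [0,1], ∑_{m=0}^∞ u^m ν({m}) = exp(−∫_0^T (λ(1−u))^{α(s)} ds) = ∏_{k=1}^n exp(−λ^{α_k}(1−u)^{α_k}(t_k − t_{k−1})). (Probability generating function of the GSFPP-VO.) -/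
open MeasureTheory

private lemma real_exp_tsum (x : ℝ) :
    Real.exp x = ∑' n : ℕ, x ^ n / (n.factorial : ℝ) := by
  rw [Real.exp_eq_exp_ℝ, NormedSpace.exp_eq_tsum_div]

private lemma pow_div_fact_le_exp {x : ℝ} (hx : 0 ≤ x) (m : ℕ) :
    x ^ m / (m.factorial : ℝ) ≤ Real.exp x := by
  rw [real_exp_tsum]
  exact Summable.le_tsum (Real.summable_pow_div_factorial x) m fun n _ =>
    div_nonneg (pow_nonneg hx n) (Nat.cast_nonneg _)

/-- if `μ` (the law at time `T` of the variable-order stable subordinator)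
has Laplace transform `∫ e^{-ws} dμ(s) = exp(-∫_0^T w^{α(s)} ds)` for all `w ≥ 0`, and
`ν {m} = ∫ e^{-λ s}(λ s)^m/m! dμ(s)`, then for every `u ∈ [0,1]` the pgf of `ν` equals
`exp(-∫_0^T (λ(1-u))^{α(s)} ds) = ∏_{k=1}^n exp(-λ^{α_k}(1-u)^{α_k}(t_k - t_{k-1}))`.
(Probability generating function of the GSFPP-VO.) -/
theorem gsfppvo_pgf
    (n : ℕ) (hn : 1 ≤ n) (t : ℕ → ℝ) (T : ℝ)
    (ht0 : t 0 = 0) (htn : t n = T)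
    (htmono : ∀ k < n, t k < t (k + 1))
    (α : ℕ → ℝ) (hα : ∀ k, 1 ≤ k → k ≤ n → α k ∈ Set.Ioo (0 : ℝ) 1)
    (A : ℝ → ℝ)
    (hA : ∀ k, 1 ≤ k → k ≤ n → ∀ s ∈ Set.Ico (t (k - 1)) (t k), A s = α k)
    (l : ℝ) (hl : 0 < l)
    (μ : Measure ℝ) [IsProbabilityMeasure μ] (hμ : μ (Set.Iio 0) = 0)
    (hLaplace : ∀ w : ℝ, 0 ≤ w →
      ∫ s, Real.exp (-(w * s)) ∂μ = Real.exp (-∫ s in (0 : ℝ)..T, w ^ A s))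
    (ν : Measure ℕ)
    (hν : ∀ m : ℕ,
      ν {m} = ENNReal.ofReal
        (∫ s, Real.exp (-(l * s)) * (l * s) ^ m / (m.factorial : ℝ) ∂μ)) :
    ∀ u ∈ Set.Icc (0 : ℝ) 1,
      ∑' m : ℕ, u ^ m * (ν {m}).toReal
          = Real.exp (-∫ s in (0 : ℝ)..T, (l * (1 - u)) ^ A s) ∧
        Real.exp (-∫ s in (0 : ℝ)..T, (l * (1 - u)) ^ A s)
          = ∏ k ∈ Finset.Icc 1 n,
              Real.exp (-(l ^ α k * (1 - u) ^ α k * (t k - t (k - 1)))) := by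
  rintro u ⟨hu0, hu1⟩
  set w : ℝ := l * (1 - u) with hw_def
  have hw : 0 ≤ w := mul_nonneg hl.le (by linarith)
  -- a.e. nonnegativity of s
  have hae : ∀ᵐ s ∂μ, 0 ≤ s := by
    rw [ae_iff]
    convert hμ using 2
    ext s
    simp [not_le]
  set f : ℕ → ℝ → ℝ := fun m s => Real.exp (-(l * s)) * (l * s) ^ m / (m.factorial : ℝ)
    with hf_def
  set g : ℕ → ℝ → ℝ := fun m s => u ^ m * f m s with hg_def
  have hf_nonneg : ∀ m s, 0 ≤ s → 0 ≤ f m s := fun m s hs => by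
    apply div_nonneg (mul_nonneg (Real.exp_pos _).le (pow_nonneg (mul_nonneg hl.le hs) m))
      (Nat.cast_nonneg _)
  have hf_le_one : ∀ m s, 0 ≤ s → f m s ≤ 1 := by
    intro m s hs
    have h1 : (l * s) ^ m / (m.factorial : ℝ) ≤ Real.exp (l * s) :=
      pow_div_fact_le_exp (mul_nonneg hl.le hs) m
    have : f m s = Real.exp (-(l * s)) * ((l * s) ^ m / (m.factorial : ℝ)) := by
      simp [hf_def, mul_div_assoc]
    rw [this]
    calc Real.exp (-(l * s)) * ((l * s) ^ m / (m.factorial : ℝ))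
        ≤ Real.exp (-(l * s)) * Real.exp (l * s) := by
          exact mul_le_mul_of_nonneg_left h1 (Real.exp_pos _).le
      _ = 1 := by rw [← Real.exp_add]; simp
  have hf_cont : ∀ m, Continuous (f m) := by
    intro m
    apply Continuous.div_const
    exact ((Real.continuous_exp.comp (continuous_const.mul continuous_id).neg).mul
      ((continuous_const.mul continuous_id).pow m))
  have hg_cont : ∀ m, Continuous (g m) := fun m => continuous_const.mul (hf_cont m)
  -- pointwise sum identity
  have hg_eq : ∀ m s, g m s = Real.exp (-(l * s)) * ((u * (l * s)) ^ m / (m.factorial : ℝ)) := by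
    intro m s
    simp only [hg_def, hf_def, mul_pow]
    ring
  have hsum : ∀ s : ℝ, Summable (fun m => g m s) := by
    intro s
    simp only [funext fun m => hg_eq m s]
    exact (Real.summable_pow_div_factorial (u * (l * s))).mul_left _
  have htsum : ∀ s : ℝ, ∑' m, g m s = Real.exp (-(w * s)) := by
    intro s
    simp only [funext fun m => hg_eq m s]
    rw [tsum_mul_left, ← real_exp_tsum, ← Real.exp_add]
    congr 1
    simp only [hw_def]; ring
  -- nonneg of g
  have hg_nonneg : ∀ m s, 0 ≤ s → 0 ≤ g m s := fun m s hs =>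
    mul_nonneg (pow_nonneg hu0 m) (hf_nonneg m s hs)
  -- toReal
  have hto : ∀ m : ℕ, (ν {m}).toReal = ∫ s, f m s ∂μ := by
    intro m
    rw [hν m, ENNReal.toReal_ofReal]
    exact integral_nonneg_of_ae (hae.mono fun s hs => hf_nonneg m s hs)
  -- the swap
  have hswap : ∫ s, ∑' m, g m s ∂μ = ∑' m, ∫ s, g m s ∂μ := by
    apply integral_tsum (fun m => (hg_cont m).aestronglyMeasurable)
    rw [← lintegral_tsum (fun m => ((hg_cont m).measurable.enorm).aemeasurable)]
    have hb : ∫⁻ s, ∑' m, (‖g m s‖₊ : ENNReal) ∂μ ≤ 1 := by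
      have : ∫⁻ s, ∑' m, (‖g m s‖₊ : ENNReal) ∂μ ≤ ∫⁻ _, 1 ∂μ := by
        apply lintegral_mono_ae
        filter_upwards [hae] with s hs
        have h1 : ∀ m, (‖g m s‖₊ : ENNReal) = ENNReal.ofReal (g m s) := by
          intro m
          rw [← enorm_eq_nnnorm, ← ofReal_norm, Real.norm_of_nonneg (hg_nonneg m s hs)]
        simp only [h1]
        rw [← ENNReal.ofReal_tsum_of_nonneg (fun m => hg_nonneg m s hs) (hsum s), htsum s]
        calc ENNReal.ofReal (Real.exp (-(w * s))) ≤ ENNReal.ofReal 1 :=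
              ENNReal.ofReal_le_ofReal
                (Real.exp_le_one_iff.mpr (by simpa using mul_nonneg hw hs))
          _ = 1 := ENNReal.ofReal_one
      simpa using this
    exact ne_top_of_le_ne_top (by simp) hb
  constructor
  · -- part 1
    calc ∑' m : ℕ, u ^ m * (ν {m}).toReal
        = ∑' m : ℕ, ∫ s, g m s ∂μ := by
          refine tsum_congr fun m => ?_
          rw [hto m, hg_def, ← integral_const_mul]
      _ = ∫ s, ∑' m, g m s ∂μ := hswap.symm
      _ = ∫ s, Real.exp (-(w * s)) ∂μ := by
          refine integral_congr_ae (Filter.Eventually.of_forall fun s => htsum s)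
      _ = Real.exp (-∫ s in (0 : ℝ)..T, w ^ A s) := hLaplace w hw
  · -- part 2
    have key : ∫ s in (0 : ℝ)..T, w ^ A s
        = ∑ k ∈ Finset.Icc 1 n, l ^ α k * (1 - u) ^ α k * (t k - t (k - 1)) := by
      have hpiece : ∀ i < n, ∫ s in (t i)..(t (i + 1)), w ^ A s
          = w ^ α (i + 1) * (t (i + 1) - t i) := by
        intro i hi
        have hle : t i ≤ t (i + 1) := (htmono i hi).le
        have hcong : ∫ s in (t i)..(t (i + 1)), w ^ A s
            = ∫ _ in (t i)..(t (i + 1)), w ^ α (i + 1) := by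
          apply intervalIntegral.integral_congr_ae
          have hne : ∀ᵐ x : ℝ, x ≠ t (i + 1) := by
            rw [ae_iff]
            have : {x : ℝ | ¬x ≠ t (i + 1)} = {t (i + 1)} := by ext x; simp
            rw [this]; exact Real.volume_singleton
          filter_upwards [hne] with x hx hmem
          rw [Set.uIoc_of_le hle] at hmem
          have hx' : x ∈ Set.Ico (t i) (t (i + 1)) :=
            ⟨hmem.1.le, lt_of_le_of_ne hmem.2 hx⟩
          have := hA (i + 1) (Nat.le_add_left 1 i) hi x (by simpa using hx')
          rw [this]
        rw [hcong, intervalIntegral.integral_const, smul_eq_mul, mul_comm]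
      have hii : ∀ i < n, IntervalIntegrable (fun s => w ^ A s) volume (t i) (t (i + 1)) := by
        intro i hi
        have hle : t i ≤ t (i + 1) := (htmono i hi).le
        rw [intervalIntegrable_iff_integrableOn_Ioc_of_le hle]
        apply Integrable.congr
          (integrableOn_const measure_Ioc_lt_top.ne : IntegrableOn
            (fun _ => w ^ α (i + 1)) (Set.Ioc (t i) (t (i + 1))) volume)
        have hne : ∀ᵐ x : ℝ, x ≠ t (i + 1) := by
          rw [ae_iff]
          have : {x : ℝ | ¬x ≠ t (i + 1)} = {t (i + 1)} := by ext x; simp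
          rw [this]; exact Real.volume_singleton
        filter_upwards [ae_restrict_mem measurableSet_Ioc, ae_restrict_of_ae hne] with x hmem hx
        have hx' : x ∈ Set.Ico (t i) (t (i + 1)) :=
          ⟨hmem.1.le, lt_of_le_of_ne hmem.2 hx⟩
        rw [hA (i + 1) (Nat.le_add_left 1 i) hi x (by simpa using hx')]
      have htel : ∑ i ∈ Finset.range n, ∫ s in (t i)..(t (i + 1)), w ^ A s
          = ∫ s in (t 0)..(t n), w ^ A s :=
        intervalIntegral.sum_integral_adjacent_intervals hii
      rw [ht0, htn] at htel
      rw [← htel]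
      rw [show (Finset.Icc 1 n) = Finset.Ico 1 (n + 1) by rw [Finset.Ico_add_one_right_eq_Icc],
        Finset.sum_Ico_eq_sum_range]
      simp only [Nat.add_sub_cancel]
      refine Finset.sum_congr rfl fun i hi => ?_
      rw [Finset.mem_range] at hi
      rw [show 1 + i = i + 1 by ring, hpiece i hi, Nat.add_sub_cancel]
      rw [← Real.mul_rpow hl.le (by linarith : (0:ℝ) ≤ 1 - u)]
    rw [key, ← Real.exp_sum]
    congr 1
    rw [← Finset.sum_neg_distrib]
end

section
/- Let Y_1, …, Y_n be independent ℕ-valued random variables on a probability space such that E[u^{Y_k}] = exp(−λ^{α_k}(1−u)^{α_k}(t_k − t_{k−1})) for every u ∈ [0,1) and every k (i.e., Y_k is a space-fractional Poisson variable of index α_k over the k-th subinterval), and let Y be an ℕ-valued random variable with E[u^Y] = exp(−∫_0^T (λ(1−u))^{α(s)} ds) for every u ∈ [0,1). Then Y and Y_1 + ⋯ + Y_n have the same distribution. -/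
open MeasureTheory
open scoped ENNReal

/-- A measurable function with values in `[0,1]` is integrable w.r.t. a probability measure. -/
lemma aux_integrable_of_mem_Icc {Ω : Type*} [MeasurableSpace Ω] (P : Measure Ω)
    [IsProbabilityMeasure P] {f : Ω → ℝ} (hf : AEStronglyMeasurable f P)
    (hb : ∀ ω, f ω ∈ Set.Icc (0 : ℝ) 1) : Integrable f P := by
  refine (integrable_const (1 : ℝ)).mono' hf (Filter.Eventually.of_forall fun ω => ?_)
  rw [Real.norm_eq_abs, abs_of_nonneg (hb ω).1]
  exact (hb ω).2

/-- Two sequences in `[0,1]` with the same generating function on `(0,1)` are equal. -/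
lemma aux_pgf_coeffs_eq {p q : ℕ → ℝ}
    (hp0 : ∀ k, 0 ≤ p k) (hp1 : ∀ k, p k ≤ 1)
    (hq0 : ∀ k, 0 ≤ q k) (hq1 : ∀ k, q k ≤ 1)
    (h : ∀ u : ℝ, u ∈ Set.Ioo (0 : ℝ) 1 → ∑' k, p k * u ^ k = ∑' k, q k * u ^ k) :
    ∀ m, p m = q m := by
  intro m
  induction m using Nat.strong_induction_on with
  | _ m IH =>
    have key : ∀ u : ℝ, 0 < u → u < 1 / 2 → |p m - q m| ≤ 2 * u := by
      intro u hu0 hu12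
      have hu1 : u < 1 := by linarith
      have hgeo : Summable (fun k : ℕ => u ^ k) := summable_geometric_of_lt_one hu0.le hu1
      have hsump : Summable (fun k => p k * u ^ k) := by
        refine Summable.of_nonneg_of_le
          (fun k => mul_nonneg (hp0 k) (pow_nonneg hu0.le k)) (fun k => ?_) hgeo
        calc p k * u ^ k ≤ 1 * u ^ k :=
              mul_le_mul_of_nonneg_right (hp1 k) (pow_nonneg hu0.le k)
          _ = u ^ k := one_mul _
      have hsumq : Summable (fun k => q k * u ^ k) := by
        refine Summable.of_nonneg_of_le
          (fun k => mul_nonneg (hq0 k) (pow_nonneg hu0.le k)) (fun k => ?_) hgeo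
        calc q k * u ^ k ≤ 1 * u ^ k :=
              mul_le_mul_of_nonneg_right (hq1 k) (pow_nonneg hu0.le k)
          _ = u ^ k := one_mul _
      have heq := h u ⟨hu0, hu1⟩
      -- cut the first m terms
      have e1 := Summable.sum_add_tsum_nat_add (f := fun k => p k * u ^ k) m hsump
      have e2 := Summable.sum_add_tsum_nat_add (f := fun k => q k * u ^ k) m hsumq
      have hs : ∑ i ∈ Finset.range m, p i * u ^ i = ∑ i ∈ Finset.range m, q i * u ^ i :=
        Finset.sum_congr rfl fun i hi => by rw [IH i (Finset.mem_range.1 hi)]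
      have h1 : ∑' i, p (i + m) * u ^ (i + m) = ∑' i, q (i + m) * u ^ (i + m) := by
        linarith
      have hsp : Summable (fun i => p (i + m) * u ^ (i + m)) :=
        (summable_nat_add_iff (f := fun k => p k * u ^ k) m).2 hsump
      have hsq : Summable (fun i => q (i + m) * u ^ (i + m)) :=
        (summable_nat_add_iff (f := fun k => q k * u ^ k) m).2 hsumq
      have h2p := Summable.tsum_eq_zero_add hsp
      have h2q := Summable.tsum_eq_zero_add hsq
      -- geometric tail bound
      have hgeosum : ∑' b : ℕ, u ^ (b + 1 + m) = u * (1 - u)⁻¹ * u ^ m := by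
        have : (fun b : ℕ => u ^ (b + 1 + m)) = fun b : ℕ => (u * u ^ m) * u ^ b := by
          funext b; ring
        rw [this, tsum_mul_left, tsum_geometric_of_lt_one hu0.le hu1]; ring
      have hgeotail : Summable (fun b : ℕ => u ^ (b + 1 + m)) := by
        have : (fun b : ℕ => u ^ (b + 1 + m)) = fun b : ℕ => (u * u ^ m) * u ^ b := by
          funext b; ring
        rw [this]; exact hgeo.mul_left _
      have hTp0 : 0 ≤ ∑' b, p (b + 1 + m) * u ^ (b + 1 + m) :=
        tsum_nonneg fun b => mul_nonneg (hp0 _) (pow_nonneg hu0.le _)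
      have hTq0 : 0 ≤ ∑' b, q (b + 1 + m) * u ^ (b + 1 + m) :=
        tsum_nonneg fun b => mul_nonneg (hq0 _) (pow_nonneg hu0.le _)
      have hsp' : Summable (fun b => p (b + 1 + m) * u ^ (b + 1 + m)) :=
        (summable_nat_add_iff (f := fun i => p (i + m) * u ^ (i + m)) 1).2 hsp
      have hsq' : Summable (fun b => q (b + 1 + m) * u ^ (b + 1 + m)) :=
        (summable_nat_add_iff (f := fun i => q (i + m) * u ^ (i + m)) 1).2 hsq
      have hTpB : ∑' b, p (b + 1 + m) * u ^ (b + 1 + m) ≤ u * (1 - u)⁻¹ * u ^ m := by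
        rw [← hgeosum]
        refine Summable.tsum_le_tsum (fun b => ?_) hsp' hgeotail
        calc p (b + 1 + m) * u ^ (b + 1 + m) ≤ 1 * u ^ (b + 1 + m) :=
              mul_le_mul_of_nonneg_right (hp1 _) (pow_nonneg hu0.le _)
          _ = u ^ (b + 1 + m) := one_mul _
      have hTqB : ∑' b, q (b + 1 + m) * u ^ (b + 1 + m) ≤ u * (1 - u)⁻¹ * u ^ m := by
        rw [← hgeosum]
        refine Summable.tsum_le_tsum (fun b => ?_) hsq' hgeotail
        calc q (b + 1 + m) * u ^ (b + 1 + m) ≤ 1 * u ^ (b + 1 + m) :=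
              mul_le_mul_of_nonneg_right (hq1 _) (pow_nonneg hu0.le _)
          _ = u ^ (b + 1 + m) := one_mul _
      have hmain : |(p m - q m) * u ^ m| ≤ u * (1 - u)⁻¹ * u ^ m := by
        have hzm : (0 : ℕ) + m = m := Nat.zero_add m
        rw [hzm] at h2p h2q
        have hdiff : (p m - q m) * u ^ m =
            (∑' b, q (b + 1 + m) * u ^ (b + 1 + m)) -
              ∑' b, p (b + 1 + m) * u ^ (b + 1 + m) := by
          have := h1
          rw [h2p, h2q] at this
          linear_combination this
        rw [hdiff]
        rw [abs_le]
        constructor <;> linarith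
      have hupos : (0 : ℝ) < u ^ m := pow_pos hu0 m
      have habs : |p m - q m| * u ^ m ≤ u * (1 - u)⁻¹ * u ^ m := by
        rwa [abs_mul, abs_of_nonneg hupos.le] at hmain
      have h3 : |p m - q m| ≤ u * (1 - u)⁻¹ :=
        le_of_mul_le_mul_right habs hupos
      have hinv : (1 - u)⁻¹ ≤ 2 := by
        rw [inv_le_comm₀ (by linarith) (by norm_num)]
        linarith
      calc |p m - q m| ≤ u * (1 - u)⁻¹ := h3
        _ ≤ u * 2 := mul_le_mul_of_nonneg_left hinv hu0.le
        _ = 2 * u := mul_comm _ _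
    by_contra hne
    have hd : 0 < |p m - q m| := abs_pos.2 (sub_ne_zero.2 hne)
    set d := |p m - q m| with hdd
    have hu0 : 0 < min (d / 8) (1 / 4) := lt_min (by linarith) (by norm_num)
    have hu12 : min (d / 8) (1 / 4) < 1 / 2 :=
      lt_of_le_of_lt (min_le_right _ _) (by norm_num)
    have := key _ hu0 hu12
    have : d ≤ 2 * (d / 8) := le_trans this
      (by have := min_le_left (d / 8) (1 / 4); linarith)
    linarith

/-- Two probability measures on `ℕ` with the same probability generating function on `[0,1)`
are equal. -/
lemma aux_measure_eq_of_pgf (μ ν : Measure ℕ) [IsProbabilityMeasure μ] [IsProbabilityMeasure ν]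
    (h : ∀ u ∈ Set.Ico (0 : ℝ) 1, ∫ k, (u : ℝ) ^ k ∂μ = ∫ k, (u : ℝ) ^ k ∂ν) : μ = ν := by
  have hint : ∀ (κ : Measure ℕ) (_ : IsProbabilityMeasure κ), ∀ u ∈ Set.Icc (0 : ℝ) 1,
      ∫ k, (u : ℝ) ^ k ∂κ = ∑' k, (κ {k}).toReal * u ^ k := by
    intro κ hκ u hu
    have hintg : Integrable (fun k : ℕ => (u : ℝ) ^ k) κ :=
      aux_integrable_of_mem_Icc κ (measurable_from_top.aestronglyMeasurable)
        (fun k => ⟨pow_nonneg hu.1 k, pow_le_one₀ hu.1 hu.2⟩)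
    rw [integral_countable' hintg]
    simp [smul_eq_mul, measureReal_def]
  have hcoeff : ∀ m : ℕ, (μ {m}).toReal = (ν {m}).toReal := by
    refine aux_pgf_coeffs_eq (fun k => ENNReal.toReal_nonneg) ?_
      (fun k => ENNReal.toReal_nonneg) ?_ ?_
    · intro k
      have h1 : μ {k} ≤ 1 := prob_le_one
      calc (μ {k}).toReal ≤ (1 : ENNReal).toReal := ENNReal.toReal_mono (by norm_num) h1
        _ = 1 := by norm_num
    · intro k
      have h1 : ν {k} ≤ 1 := prob_le_one
      calc (ν {k}).toReal ≤ (1 : ENNReal).toReal := ENNReal.toReal_mono (by norm_num) h1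
        _ = 1 := by norm_num
    · intro u hu
      have h1 := hint μ inferInstance u ⟨hu.1.le, hu.2.le⟩
      have h2 := hint ν inferInstance u ⟨hu.1.le, hu.2.le⟩
      rw [← h1, ← h2]
      exact h u ⟨hu.1.le, hu.2⟩
  refine Measure.ext_of_singleton fun a => ?_
  have := hcoeff a
  rwa [ENNReal.toReal_eq_toReal_iff' (measure_ne_top μ _) (measure_ne_top ν _)] at this

/-- The integral of a product of independent `[0,1]`-valued functions. -/
lemma aux_integral_prod {Ω : Type*} [MeasurableSpace Ω] (P : Measure Ω)
    [IsProbabilityMeasure P] {ι : Type*} (f : ι → Ω → ℝ) (hfmeas : ∀ i, Measurable (f i))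
    (hfindep : ProbabilityTheory.iIndepFun f P)
    (hfIcc : ∀ i ω, f i ω ∈ Set.Icc (0 : ℝ) 1) (s : Finset ι) :
    ∫ ω, ∏ k ∈ s, f k ω ∂P = ∏ k ∈ s, ∫ ω, f k ω ∂P := by
  classical
  have hprodIcc : ∀ (s : Finset ι) ω, (∏ k ∈ s, f k ω) ∈ Set.Icc (0 : ℝ) 1 := by
    intro s ω
    constructor
    · exact Finset.prod_nonneg fun k _ => (hfIcc k ω).1
    · exact Finset.prod_le_one (fun k _ => (hfIcc k ω).1) (fun k _ => (hfIcc k ω).2)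
  induction s using Finset.induction_on with
  | empty => simp
  | @insert a s ha IH =>
    have hips : ProbabilityTheory.IndepFun (∏ j ∈ s, f j) (f a) P :=
      hfindep.indepFun_finset_prod_of_notMem hfmeas ha
    have hfe2 : (∏ j ∈ s, f j : Ω → ℝ) = fun ω => ∏ j ∈ s, f j ω := by
      funext ω; rw [Finset.prod_apply]
    have hint1 : Integrable (∏ j ∈ s, f j) P := by
      rw [hfe2]
      exact aux_integrable_of_mem_Icc P
        ((Finset.measurable_prod s fun j _ => hfmeas j).aestronglyMeasurable) (hprodIcc s)
    have hint2 : Integrable (f a) P :=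
      aux_integrable_of_mem_Icc P (hfmeas a).aestronglyMeasurable (hfIcc a)
    have hmul := hips.integral_mul_eq_mul_integral hint1.aestronglyMeasurable hint2.aestronglyMeasurable
    have hfe : ((∏ j ∈ s, f j) * f a : Ω → ℝ) = fun ω => ∏ k ∈ insert a s, f k ω := by
      funext ω
      rw [Pi.mul_apply, Finset.prod_apply, Finset.prod_insert ha, mul_comm]
    rw [Finset.prod_insert ha, ← hfe, hmul, hfe2, IH]
    exact mul_comm _ _

open ProbabilityTheory in
/-- if `Y_1, …, Y_n` are independent `ℕ`-valued random variables with
`E[u^{Y_k}] = exp(−λ^{α_k}(1−u)^{α_k}(t_k − t_{k−1}))` for all `u ∈ [0,1)` (space-fractional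
Poisson variables over the subintervals), and `Y` is an `ℕ`-valued random variable with
`E[u^Y] = exp(−∫_0^T (λ(1−u))^{α(s)} ds)` for all `u ∈ [0,1)` (the GSFPP-VO at time `T`),
then `Y` and `Y_1 + ⋯ + Y_n` have the same distribution. -/
theorem gsfppvo_eq_sum_in_distribution
    (n : ℕ) (hn : 1 ≤ n) (t : ℕ → ℝ) (T : ℝ)
    (ht0 : t 0 = 0) (htn : t n = T)
    (htmono : ∀ k < n, t k < t (k + 1))
    (α : ℕ → ℝ) (hα : ∀ k, 1 ≤ k → k ≤ n → α k ∈ Set.Ioo (0 : ℝ) 1)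
    (A : ℝ → ℝ)
    (hA : ∀ k, 1 ≤ k → k ≤ n → ∀ s ∈ Set.Ico (t (k - 1)) (t k), A s = α k)
    (l : ℝ) (hl : 0 < l)
    {Ω : Type*} [MeasurableSpace Ω] (P : Measure Ω) [IsProbabilityMeasure P]
    (Y : Fin n → Ω → ℕ) (hYmeas : ∀ k, Measurable (Y k))
    (hindep : ProbabilityTheory.iIndepFun Y P)
    (hYpgf : ∀ u ∈ Set.Ico (0 : ℝ) 1, ∀ k : Fin n,
      ∫ ω, u ^ Y k ω ∂P
        = Real.exp (-(l ^ α ((k : ℕ) + 1) * (1 - u) ^ α ((k : ℕ) + 1) *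
            (t ((k : ℕ) + 1) - t (k : ℕ)))))
    (Z : Ω → ℕ) (hZmeas : Measurable Z)
    (hZpgf : ∀ u ∈ Set.Ico (0 : ℝ) 1,
      ∫ ω, u ^ Z ω ∂P = Real.exp (-∫ s in (0 : ℝ)..T, (l * (1 - u)) ^ A s)) :
    Measure.map Z P = Measure.map (fun ω => ∑ k : Fin n, Y k ω) P := by
  set S : Ω → ℕ := fun ω => ∑ k : Fin n, Y k ω with hS
  have hSmeas : Measurable S := Finset.measurable_sum _ fun k _ => hYmeas k
  have : IsProbabilityMeasure (Measure.map Z P) :=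
    Measure.isProbabilityMeasure_map hZmeas.aemeasurable
  have : IsProbabilityMeasure (Measure.map S P) :=
    Measure.isProbabilityMeasure_map hSmeas.aemeasurable
  refine aux_measure_eq_of_pgf _ _ fun u hu => ?_
  have h1u : 0 < 1 - u := by linarith [hu.2]
  -- rewrite distribution integrals as integrals over Ω
  rw [integral_map hZmeas.aemeasurable measurable_from_top.aestronglyMeasurable,
    integral_map hSmeas.aemeasurable measurable_from_top.aestronglyMeasurable]
  -- compute the time integral
  have hint : ∀ k < n, IntervalIntegrable (fun s => (l * (1 - u)) ^ A s) volume
      (t k) (t (k + 1)) := by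
    intro k hk
    have hle : t k ≤ t (k + 1) := (htmono k hk).le
    rw [intervalIntegrable_iff, Set.uIoc_of_le hle]
    have hne : ∀ᵐ x : ℝ ∂(volume.restrict (Set.Ioc (t k) (t (k + 1)))),
        x ≠ t (k + 1) := by
      refine ae_restrict_of_ae ?_
      rw [MeasureTheory.ae_iff]
      simpa using Real.volume_singleton (x := t (k + 1))
    have hmem := ae_restrict_mem (μ := volume) (measurableSet_Ioc (a := t k) (b := t (k + 1)))
    have haeeq : (fun s => (l * (1 - u)) ^ A s)
        =ᵐ[volume.restrict (Set.Ioc (t k) (t (k + 1)))]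
        fun _ => (l * (1 - u)) ^ α (k + 1) := by
      filter_upwards [hne, hmem] with x hx hxm
      have hico : x ∈ Set.Ico (t ((k + 1) - 1)) (t (k + 1)) := by
        simp only [Nat.add_sub_cancel]
        exact ⟨hxm.1.le, lt_of_le_of_ne hxm.2 hx⟩
      rw [hA (k + 1) (Nat.le_add_left 1 k) hk x hico]
    exact (integrableOn_const measure_Ioc_lt_top.ne).congr haeeq.symm
  have hintval : ∀ k < n, ∫ s in (t k)..(t (k + 1)), (l * (1 - u)) ^ A s
      = l ^ α (k + 1) * (1 - u) ^ α (k + 1) * (t (k + 1) - t k) := by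
    intro k hk
    have hle : t k ≤ t (k + 1) := (htmono k hk).le
    have hcongr : ∫ s in (t k)..(t (k + 1)), (l * (1 - u)) ^ A s
        = ∫ _ in (t k)..(t (k + 1)), (l * (1 - u)) ^ α (k + 1) := by
      refine intervalIntegral.integral_congr_ae ?_
      have hne : ∀ᵐ x : ℝ ∂volume, x ≠ t (k + 1) := by
        rw [MeasureTheory.ae_iff]
        simpa using Real.volume_singleton (x := t (k + 1))
      filter_upwards [hne] with x hx hxm
      rw [Set.uIoc_of_le hle] at hxm
      have hico : x ∈ Set.Ico (t ((k + 1) - 1)) (t (k + 1)) := by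
        simp only [Nat.add_sub_cancel]
        exact ⟨hxm.1.le, lt_of_le_of_ne hxm.2 hx⟩
      rw [hA (k + 1) (Nat.le_add_left 1 k) hk x hico]
    rw [hcongr, intervalIntegral.integral_const, smul_eq_mul,
      Real.mul_rpow hl.le h1u.le]
    ring
  have hsplit : ∫ s in (0 : ℝ)..T, (l * (1 - u)) ^ A s
      = ∑ k ∈ Finset.range n, l ^ α (k + 1) * (1 - u) ^ α (k + 1) * (t (k + 1) - t k) := by
    rw [← ht0, ← htn,
      ← intervalIntegral.sum_integral_adjacent_intervals (fun k hk => hint k hk)]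
    exact Finset.sum_congr rfl fun k hk => hintval k (Finset.mem_range.1 hk)
  -- LHS is exp of minus this sum
  rw [hZpgf u hu, hsplit]
  -- RHS: pgf of the sum
  have hprod : (fun ω => u ^ S ω) = fun ω => ∏ k : Fin n, u ^ Y k ω := by
    funext ω
    rw [hS, Finset.prod_pow_eq_pow_sum]
  have hfindep : ProbabilityTheory.iIndepFun
      (fun (k : Fin n) (ω : Ω) => u ^ Y k ω) P :=
    hindep.comp (fun _ m => u ^ m) (fun _ => measurable_from_top)
  rw [hprod, aux_integral_prod P (fun k ω => u ^ Y k ω)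
    (fun k => measurable_from_top.comp (hYmeas k)) hfindep
    (fun k ω => ⟨pow_nonneg hu.1 _, pow_le_one₀ hu.1 hu.2.le⟩) Finset.univ]
  have : ∏ k : Fin n, ∫ ω, u ^ Y k ω ∂P
      = ∏ k : Fin n, Real.exp (-(l ^ α ((k : ℕ) + 1) * (1 - u) ^ α ((k : ℕ) + 1) *
          (t ((k : ℕ) + 1) - t (k : ℕ)))) :=
    Finset.prod_congr rfl fun k _ => hYpgf u hu k
  rw [this, ← Real.exp_sum]
  congr 1
  rw [← Finset.sum_neg_distrib]
  exact (Fin.sum_univ_eq_sum_range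
    (fun k => -(l ^ α (k + 1) * (1 - u) ^ α (k + 1) * (t (k + 1) - t k))) n).symm
end

section
/- The sequence (a_m)_{m≥0} is summable and ∑_{m=0}^∞ a_m = 1; that is, the pmf of the GSFPP-VO sums to one. -/
/-- The falling factorial `(β)_m = β(β−1)⋯(β−m+1)`, with `(β)_0 = 1`. -/
noncomputable def fallingFactorial (b : ℝ) : ℕ → ℝ
  | 0 => 1
  | m + 1 => fallingFactorial b m * (b - m)

/-- The pmf of the GSFPP-VO:
`a_m = ((−1)^m/m!) ∑_{r=0}^∞ ((−1)^r/r!) ∑_{x_1+⋯+x_n=r} (r!/(x_1!⋯x_n!))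
  λ^{α_1x_1+⋯+α_nx_n} (α_1x_1+⋯+α_nx_n)_m ∏_{k=1}^n (t_k − t_{k−1})^{x_k}`. -/
noncomputable def gsfppPmf (n : ℕ) (t : ℕ → ℝ) (α : ℕ → ℝ) (l : ℝ) (m : ℕ) : ℝ :=
  ((-1 : ℝ) ^ m / (m.factorial : ℝ)) *
    ∑' r : ℕ, ((-1 : ℝ) ^ r / (r.factorial : ℝ)) *
      ∑ x ∈ Finset.Nat.antidiagonalTuple n r,
        ((r.factorial : ℝ) / ∏ i : Fin n, ((x i).factorial : ℝ)) *
          l ^ (∑ i : Fin n, α ((i : ℕ) + 1) * (x i : ℝ)) *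
          fallingFactorial (∑ i : Fin n, α ((i : ℕ) + 1) * (x i : ℝ)) m *
          ∏ i : Fin n, (t ((i : ℕ) + 1) - t (i : ℕ)) ^ (x i)

namespace GSFPP

open Finset Filter

lemma ff_succ (s : ℝ) (m : ℕ) :
    fallingFactorial s (m + 1) = fallingFactorial s m * (s - m) := rfl

lemma ff_zero_of_ne (m : ℕ) (hm : m ≠ 0) : fallingFactorial (0 : ℝ) m = 0 := by
  cases m with
  | zero => exact absurd rfl hm
  | succ k =>
    induction k with
    | zero => simp [ff_succ, fallingFactorial]
    | succ j ih => rw [ff_succ, ih (by simp)]; ring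

lemma ff_shift (s : ℝ) (m : ℕ) :
    fallingFactorial s (m + 1) = s * fallingFactorial (s - 1) m := by
  induction m with
  | zero => simp [ff_succ, fallingFactorial]
  | succ k ih =>
    rw [ff_succ, ih, ff_succ]
    push_cast
    ring

/-- `b s m = |(s)_m| / m!`. -/
noncomputable def bb (s : ℝ) (m : ℕ) : ℝ := |fallingFactorial s m| / (m.factorial : ℝ)

lemma bb_nonneg (s : ℝ) (m : ℕ) : 0 ≤ bb s m :=
  div_nonneg (abs_nonneg _) (by positivity)

lemma bb_zero (s : ℝ) : bb s 0 = 1 := by simp [bb, fallingFactorial]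

lemma bb_succ (s : ℝ) (m : ℕ) : bb s (m + 1) = bb s m * (|s - m| / (m + 1)) := by
  rw [bb, bb, ff_succ, abs_mul, Nat.factorial_succ]
  have h1 : (m.factorial : ℝ) ≠ 0 := Nat.cast_ne_zero.2 m.factorial_ne_zero
  push_cast
  rw [mul_comm ((m:ℝ)+1) _, ← div_div, div_mul_div_comm, div_div]

/-- telescoping identity: for `s ≤ m`, `s * b_m = m * b_m - (m+1) * b_{m+1}`. -/
lemma bb_telescope (s : ℝ) (m : ℕ) (hm : s ≤ m) :
    s * bb s m = m * bb s m - (m + 1) * bb s (m + 1) := by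
  rw [bb_succ, abs_of_nonpos (by linarith : s - (m : ℝ) ≤ 0)]
  have h1 : ((m : ℝ) + 1) ≠ 0 := by positivity
  field_simp
  ring


lemma bb_sum_Ico (s : ℝ) (M N : ℕ) (hMN : M ≤ N) (hsM : s ≤ M) :
    s * ∑ m ∈ Ico M N, bb s m = M * bb s M - N * bb s N := by
  induction N, hMN using Nat.le_induction with
  | base => simp
  | succ N hMN ih =>
    rw [Finset.sum_Ico_succ_top hMN, mul_add, ih,
      bb_telescope s N (le_trans hsM (by exact_mod_cast Nat.cast_le.2 hMN))]
    push_cast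
    ring

lemma bb_le_pow (s : ℝ) (hs : 0 ≤ s) (m : ℕ) (hm : m ≤ ⌈s⌉₊) :
    bb s m ≤ s ^ m / m.factorial := by
  induction m with
  | zero => simp [bb_zero]
  | succ k ih =>
    have hk : k ≤ ⌈s⌉₊ := le_trans (Nat.le_succ k) hm
    have hks : (k : ℝ) < s := by
      have h1 : (k : ℝ) ≤ (⌈s⌉₊ : ℝ) - 1 := by
        have : k + 1 ≤ ⌈s⌉₊ := hm
        have := Nat.cast_le (α := ℝ).2 this
        push_cast at this
        linarith
      have h2 : (⌈s⌉₊ : ℝ) < s + 1 := Nat.ceil_lt_add_one hs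
      linarith
    have habs : |s - k| = s - k := abs_of_nonneg (by linarith)
    rw [bb_succ, habs]
    have h1 : (s - k)/(k+1) ≤ s/(k+1) :=
      (div_le_div_iff_of_pos_right (by positivity)).2 (by linarith)
    have h3 : bb s k * ((s - k)/(k+1)) ≤ (s^k / k.factorial) * (s/(k+1)) :=
      mul_le_mul (ih hk) h1 (div_nonneg (by linarith) (by positivity)) (div_nonneg (pow_nonneg hs k) (by positivity))
    calc bb s k * ((s - k)/(k+1)) ≤ (s^k / k.factorial) * (s/(k+1)) := h3
      _ = s ^ (k+1) / (k+1).factorial := by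
          rw [Nat.factorial_succ]
          push_cast
          rw [div_mul_div_comm, ← pow_succ, mul_comm ((k:ℝ)+1) _]

lemma bb_le_exp (s : ℝ) (hs : 0 ≤ s) (m : ℕ) (hm : m ≤ ⌈s⌉₊) :
    bb s m ≤ Real.exp s := by
  refine (bb_le_pow s hs m hm).trans ?_
  calc s ^ m / m.factorial ≤ ∑ i ∈ range (m + 1), s ^ i / i.factorial := by
        refine Finset.single_le_sum (f := fun i => s ^ i / (i.factorial : ℝ))
          (fun i _ => by positivity) (self_mem_range_succ m)
    _ ≤ Real.exp s := Real.sum_le_exp_of_nonneg hs (m + 1)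

lemma bb_partial_le (s : ℝ) (hs : 0 < s) (N : ℕ) :
    ∑ m ∈ range N, bb s m ≤
      (∑ m ∈ range ⌈s⌉₊, bb s m) + ⌈s⌉₊ * bb s ⌈s⌉₊ / s := by
  set M := ⌈s⌉₊ with hM
  have hsM : s ≤ M := Nat.le_ceil s
  rcases le_or_gt N M with h | h
  · have h1 : ∑ m ∈ range N, bb s m ≤ ∑ m ∈ range M, bb s m :=
      Finset.sum_le_sum_of_subset_of_nonneg (Finset.range_subset_range.2 h)
        (fun i _ _ => bb_nonneg s i)
    have h2 : 0 ≤ (M : ℝ) * bb s M / s := by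
      have := bb_nonneg s M
      positivity
    linarith
  · have hMN : M ≤ N := h.le
    have hsplit : range N = range M ∪ Ico M N := by
      rw [Finset.range_eq_Ico, Finset.range_eq_Ico]
      exact (Finset.Ico_union_Ico_eq_Ico (Nat.zero_le M) hMN).symm
    have hdisj : Disjoint (range M) (Ico M N) := by
      rw [Finset.range_eq_Ico]
      exact Finset.Ico_disjoint_Ico_consecutive 0 M N
    rw [hsplit, Finset.sum_union hdisj]
    have h1 : s * ∑ m ∈ Ico M N, bb s m = M * bb s M - N * bb s N :=
      bb_sum_Ico s M N hMN hsM
    have h2 : ∑ m ∈ Ico M N, bb s m ≤ M * bb s M / s := by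
      rw [le_div_iff₀ hs, mul_comm]
      have h3 : 0 ≤ (N : ℝ) * bb s N := by
        have := bb_nonneg s N
        positivity
      linarith
    linarith

lemma bb_summable (s : ℝ) (hs : 0 < s) : Summable (bb s) :=
  summable_of_sum_range_le (fun m => bb_nonneg s m) (bb_partial_le s hs)

lemma bb_tsum_le (s : ℝ) (hs : 0 < s) (r : ℕ) (hsr : s ≤ r) :
    ∑' m, bb s m ≤ (r : ℝ) * Real.exp r * (1 + 1 / s) := by
  have hM : ⌈s⌉₊ ≤ r := Nat.ceil_le.2 (by exact_mod_cast hsr)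
  have h0 : ∑' m, bb s m ≤ (∑ m ∈ range ⌈s⌉₊, bb s m) + ⌈s⌉₊ * bb s ⌈s⌉₊ / s :=
    Summable.tsum_le_of_sum_range_le (bb_summable s hs) (bb_partial_le s hs)
  have hexp : ∀ m : ℕ, m ≤ ⌈s⌉₊ → bb s m ≤ Real.exp s := fun m hm =>
    bb_le_exp s hs.le m hm
  have h1 : ∑ m ∈ range ⌈s⌉₊, bb s m ≤ (⌈s⌉₊ : ℝ) * Real.exp s := by
    calc ∑ m ∈ range ⌈s⌉₊, bb s m ≤ ∑ _m ∈ range ⌈s⌉₊, Real.exp s :=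
          Finset.sum_le_sum (fun i hi => hexp i (Finset.mem_range.1 hi).le)
      _ = (⌈s⌉₊ : ℝ) * Real.exp s := by rw [Finset.sum_const, card_range, nsmul_eq_mul]
  have h2 : (⌈s⌉₊ : ℝ) * bb s ⌈s⌉₊ / s ≤ (⌈s⌉₊ : ℝ) * Real.exp s / s := by
    exact (div_le_div_iff_of_pos_right hs).2
      (mul_le_mul_of_nonneg_left (hexp _ le_rfl) (Nat.cast_nonneg _))
  have hMr : (⌈s⌉₊ : ℝ) ≤ r := by exact_mod_cast hM
  have hes : Real.exp s ≤ Real.exp r := Real.exp_le_exp.2 hsr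
  have hepos : 0 < Real.exp s := Real.exp_pos s
  have h3 : (⌈s⌉₊ : ℝ) * Real.exp s ≤ r * Real.exp r :=
    mul_le_mul hMr hes hepos.le (Nat.cast_nonneg r)
  have h4 : (⌈s⌉₊ : ℝ) * Real.exp s / s = (⌈s⌉₊ : ℝ) * Real.exp s * (1/s) := by ring
  have h5 : (r : ℝ) * Real.exp r * (1 + 1/s) = r * Real.exp r + r * Real.exp r * (1/s) := by
    ring
  rw [h5]
  have h6 : (⌈s⌉₊ : ℝ) * Real.exp s * (1/s) ≤ r * Real.exp r * (1/s) :=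
    mul_le_mul_of_nonneg_right h3 (by positivity)
  calc ∑' m, bb s m ≤ (∑ m ∈ range ⌈s⌉₊, bb s m) + ⌈s⌉₊ * bb s ⌈s⌉₊ / s := h0
    _ ≤ (⌈s⌉₊ : ℝ) * Real.exp s + (⌈s⌉₊ : ℝ) * Real.exp s / s := by linarith
    _ ≤ r * Real.exp r + r * Real.exp r * (1/s) := by
        rw [h4]
        exact add_le_add h3 h6

lemma bb_mul_tendsto_zero (s : ℝ) (hs : 0 < s) :
    Tendsto (fun N : ℕ => (N : ℝ) * bb s N) atTop (nhds 0) := by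
  set M := ⌈s⌉₊ with hM
  have hsM : s ≤ M := Nat.le_ceil s
  have hsum := bb_summable s hs
  set T : ℝ := ∑' m, bb s m with hT
  set P : ℕ → ℝ := fun N => ∑ m ∈ range N, bb s m with hP
  set L : ℝ := (M : ℝ) * bb s M - s * (T - P M) with hL
  have hPT : Tendsto P atTop (nhds T) := hsum.hasSum.tendsto_sum_nat
  have key : ∀ N, M ≤ N → (N : ℝ) * bb s N = (M : ℝ) * bb s M - s * (P N - P M) := by
    intro N hN
    have h1 := bb_sum_Ico s M N hN hsM
    rw [Finset.sum_Ico_eq_sub _ hN] at h1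
    simp only [hP]
    linarith
  have hPle : ∀ N, P N ≤ T := fun N =>
    Summable.sum_le_tsum (range N) (fun i _ => bb_nonneg s i) hsum
  have hge : ∀ N, M ≤ N → L ≤ (N : ℝ) * bb s N := by
    intro N hN
    rw [key N hN, hL]
    have := hPle N
    nlinarith
  have hlim : Tendsto (fun N : ℕ => (N : ℝ) * bb s N) atTop (nhds L) := by
    have h2 : Tendsto (fun N : ℕ => (M : ℝ) * bb s M - s * (P N - P M)) atTop (nhds L) := by
      rw [hL]
      exact tendsto_const_nhds.sub (((hPT.sub tendsto_const_nhds).const_mul s))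
    refine h2.congr' ?_
    filter_upwards [eventually_ge_atTop M] with N hN
    exact (key N hN).symm
  have hL0 : 0 ≤ L :=
    ge_of_tendsto hlim (by
      filter_upwards with N
      have := bb_nonneg s N
      positivity)
  have hLle : L ≤ 0 := by
    by_contra hpos
    push_neg at hpos
    have hharm : Summable (fun N : ℕ => L * (1 / ((N : ℝ) + (M + 1)))) := by
      have hcmp : ∀ N : ℕ, L * (1 / ((N : ℝ) + (M + 1))) ≤ bb s (N + (M + 1)) := by
        intro N
        have hNM : M ≤ N + (M + 1) := by omega
        have h1 : L ≤ ((N + (M + 1) : ℕ) : ℝ) * bb s (N + (M + 1)) := hge _ hNM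
        have h2 : (0 : ℝ) < (N : ℝ) + (M + 1) := by positivity
        rw [mul_one_div, div_le_iff₀ h2]
        calc L ≤ ((N + (M + 1) : ℕ) : ℝ) * bb s (N + (M + 1)) := h1
          _ = bb s (N + (M + 1)) * ((N : ℝ) + (M + 1)) := by push_cast; ring
      apply Summable.of_nonneg_of_le (fun N => by positivity) hcmp
      exact (summable_nat_add_iff (M + 1)).2 hsum
    have h4 : Summable (fun N : ℕ => 1 / ((N : ℝ) + (M + 1))) :=
      (summable_mul_left_iff (ne_of_gt hpos)).1 hharm
    have h5 : Summable (fun N : ℕ => 1 / ((N : ℝ))) := by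
      have h6 : (fun N : ℕ => 1 / (((N + (M + 1) : ℕ)) : ℝ)) =
          (fun N : ℕ => 1 / ((N : ℝ) + (M + 1))) := by
        funext N
        push_cast
        ring_nf
      exact (summable_nat_add_iff (M + 1)).1 (by rw [h6]; exact h4)
    exact Real.not_summable_one_div_natCast h5
  have : L = 0 := le_antisymm hLle hL0
  rwa [this] at hlim

/-- the alternating series term -/
noncomputable def alt (s : ℝ) (m : ℕ) : ℝ :=
  (-1) ^ m * fallingFactorial s m / (m.factorial : ℝ)

lemma abs_alt (s : ℝ) (m : ℕ) : |alt s m| = bb s m := by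
  rw [alt, bb, abs_div, abs_mul, abs_pow, abs_neg, abs_one, one_pow, one_mul,
    Nat.abs_cast]

lemma alt_partial (s : ℝ) (N : ℕ) :
    ∑ m ∈ range (N + 1), alt s m =
      (-1) ^ N * fallingFactorial (s - 1) N / (N.factorial : ℝ) := by
  induction N with
  | zero => simp [alt, fallingFactorial]
  | succ N ih =>
    rw [Finset.sum_range_succ, ih, alt, ff_shift, ff_succ]
    have h1 : (N.factorial : ℝ) ≠ 0 := Nat.cast_ne_zero.2 N.factorial_ne_zero
    have h2 : ((N + 1).factorial : ℝ) = (N + 1) * N.factorial := by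
      rw [Nat.factorial_succ]; push_cast; ring
    have h3 : ((N : ℝ) + 1) ≠ 0 := by positivity
    rw [h2]
    field_simp
    ring

lemma alt_summable (s : ℝ) (hs : 0 < s) : Summable (alt s) := by
  refine Summable.of_abs ?_
  refine (bb_summable s hs).congr fun m => ?_
  rw [abs_alt]

lemma alt_tsum_zero (s : ℝ) (hs : 0 < s) : ∑' m, alt s m = 0 := by
  have hsum := alt_summable s hs
  have h1 : Tendsto (fun N => ∑ m ∈ range N, alt s m) atTop (nhds (∑' m, alt s m)) :=
    hsum.hasSum.tendsto_sum_nat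
  have h2 : Tendsto (fun N => ∑ m ∈ range (N + 1), alt s m) atTop (nhds 0) := by
    have habs : ∀ N : ℕ, |∑ m ∈ range (N + 1), alt s m| = (N + 1) * bb s (N + 1) / s := by
      intro N
      rw [alt_partial, abs_div, abs_mul, abs_pow, abs_neg, abs_one, one_pow, one_mul,
        Nat.abs_cast]
      have h3 : bb s (N + 1) = s * |fallingFactorial (s - 1) N| / ((N + 1).factorial : ℝ) := by
        rw [bb, ff_shift, abs_mul, abs_of_pos hs]
      rw [h3, Nat.factorial_succ]
      have h1 : (N.factorial : ℝ) ≠ 0 := Nat.cast_ne_zero.2 N.factorial_ne_zero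
      have h4 : ((N : ℝ) + 1) ≠ 0 := by positivity
      push_cast
      field_simp
    have h5 : Tendsto (fun N : ℕ => ((N + 1 : ℕ) : ℝ) * bb s (N + 1) / s) atTop (nhds 0) := by
      have h6 := ((bb_mul_tendsto_zero s hs).comp (tendsto_add_atTop_nat 1)).div_const s
      simpa using h6
    have h7 : Tendsto (fun N : ℕ => |∑ m ∈ range (N + 1), alt s m|) atTop (nhds 0) := by
      refine h5.congr fun N => ?_
      rw [habs N]
      push_cast
      ring_nf
    exact (tendsto_zero_iff_abs_tendsto_zero _).2 h7
  have h8 : Tendsto (fun N => ∑ m ∈ range (N + 1), alt s m) atTop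
      (nhds (∑' m, alt s m)) := h1.comp (tendsto_add_atTop_nat 1)
  exact tendsto_nhds_unique h8 h2

lemma alt_zero_eq (m : ℕ) : alt 0 m = if m = 0 then 1 else 0 := by
  rcases Nat.eq_zero_or_pos m with h | h
  · subst h; simp [alt, fallingFactorial]
  · rw [alt, ff_zero_of_ne m (Nat.pos_iff_ne_zero.1 h), if_neg (Nat.pos_iff_ne_zero.1 h)]
    simp

lemma alt_summable_zero : Summable (alt 0) := by
  apply summable_of_ne_finset_zero (s := {0})
  intro m hm
  rw [alt_zero_eq, if_neg (by simpa using hm)]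

lemma alt_tsum_one : ∑' m, alt 0 m = 1 := by
  rw [tsum_eq_single 0 (fun m hm => by rw [alt_zero_eq, if_neg hm])]
  simp [alt_zero_eq]

lemma bb_zero_eq (m : ℕ) : bb 0 m = if m = 0 then 1 else 0 := by
  rcases Nat.eq_zero_or_pos m with h | h
  · subst h; simp [bb, fallingFactorial]
  · rw [bb, ff_zero_of_ne m (Nat.pos_iff_ne_zero.1 h), if_neg (Nat.pos_iff_ne_zero.1 h)]
    simp

lemma bb_summable_zero : Summable (bb 0) := by
  apply summable_of_ne_finset_zero (s := {0})
  intro m hm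
  rw [bb_zero_eq, if_neg (by simpa using hm)]

lemma bb_tsum_zero_le : ∑' m, bb 0 m ≤ 1 := by
  rw [tsum_eq_single 0 (fun m hm => by rw [bb_zero_eq, if_neg hm])]
  simp [bb_zero_eq]

/-- `S x = ∑ α_{i+1} x_i`. -/
noncomputable def Sx (n : ℕ) (α : ℕ → ℝ) (x : Fin n → ℕ) : ℝ :=
  ∑ i : Fin n, α ((i : ℕ) + 1) * (x i : ℝ)

/-- the `m`-independent weight. -/
noncomputable def wx (n : ℕ) (t : ℕ → ℝ) (α : ℕ → ℝ) (l : ℝ) (x : Fin n → ℕ) : ℝ :=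
  (Nat.multinomial Finset.univ x : ℝ) * l ^ (Sx n α x) *
    ∏ i : Fin n, (t ((i : ℕ) + 1) - t (i : ℕ)) ^ (x i)

/-- the summand of the double series, `p = (r, m)`. -/
noncomputable def gg (n : ℕ) (t : ℕ → ℝ) (α : ℕ → ℝ) (l : ℝ) (p : ℕ × ℕ) : ℝ :=
  ((-1 : ℝ) ^ p.2 / (p.2.factorial : ℝ)) *
    (((-1 : ℝ) ^ p.1 / (p.1.factorial : ℝ)) *
      ∑ x ∈ Finset.Nat.antidiagonalTuple n p.1,
        wx n t α l x * fallingFactorial (Sx n α x) p.2)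

end GSFPP

open GSFPP Finset

/-- the pmf `(a_m)` of the GSFPP-VO is summable and sums to one. -/
theorem gsfppvo_pmf_sums_to_one
    (n : ℕ) (hn : 1 ≤ n) (t : ℕ → ℝ)
    (ht0 : t 0 = 0) (htmono : ∀ k < n, t k < t (k + 1))
    (α : ℕ → ℝ) (hα : ∀ k, 1 ≤ k → k ≤ n → α k ∈ Set.Ioo (0 : ℝ) 1)
    (l : ℝ) (hl : 0 < l) :
    Summable (fun m : ℕ => gsfppPmf n t α l m) ∧
      ∑' m : ℕ, gsfppPmf n t α l m = 1 := by
  classical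
  haveI : NeZero n := ⟨by omega⟩
  -- basic positivity facts
  have hd0 : ∀ i : Fin n, 0 < t ((i : ℕ) + 1) - t (i : ℕ) := fun i =>
    sub_pos.2 (htmono i i.isLt)
  have hαmem : ∀ i : Fin n, α ((i : ℕ) + 1) ∈ Set.Ioo (0 : ℝ) 1 := fun i =>
    hα _ (by omega) i.isLt
  set a : ℝ := Finset.univ.inf' Finset.univ_nonempty (fun i : Fin n => α ((i : ℕ) + 1))
    with ha
  have haα : ∀ i : Fin n, a ≤ α ((i : ℕ) + 1) := fun i =>
    Finset.inf'_le _ (Finset.mem_univ i)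
  have ha0 : 0 < a := by
    rw [ha, Finset.lt_inf'_iff]
    exact fun i _ => (hαmem i).1
  -- facts about `Sx`
  have hS0 : ∀ x : Fin n → ℕ, 0 ≤ Sx n α x := fun x =>
    Finset.sum_nonneg fun i _ => mul_nonneg (hαmem i).1.le (Nat.cast_nonneg _)
  have hSler : ∀ (r : ℕ) (x : Fin n → ℕ), x ∈ Finset.Nat.antidiagonalTuple n r →
      Sx n α x ≤ r := by
    intro r x hx
    have hsum : ∑ i, x i = r := Finset.Nat.mem_antidiagonalTuple.1 hx
    have h1 : Sx n α x ≤ ∑ i : Fin n, (x i : ℝ) := by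
      refine Finset.sum_le_sum fun i _ => ?_
      calc α ((i : ℕ) + 1) * (x i : ℝ) ≤ 1 * (x i : ℝ) :=
            mul_le_mul_of_nonneg_right (hαmem i).2.le (Nat.cast_nonneg _)
        _ = (x i : ℝ) := one_mul _
    calc Sx n α x ≤ ∑ i : Fin n, (x i : ℝ) := h1
      _ = (r : ℝ) := by rw [← hsum]; push_cast; rfl
  have haSr : ∀ (r : ℕ) (x : Fin n → ℕ), x ∈ Finset.Nat.antidiagonalTuple n r →
      r ≠ 0 → a ≤ Sx n α x := by
    intro r x hx hr
    have hsum : ∑ i, x i = r := Finset.Nat.mem_antidiagonalTuple.1 hx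
    have hex : ∃ i : Fin n, 1 ≤ x i := by
      by_contra hcon
      push_neg at hcon
      have h0 : ∑ i, x i = 0 := Finset.sum_eq_zero fun i _ => Nat.lt_one_iff.1 (hcon i)
      rw [h0] at hsum
      exact hr hsum.symm
    obtain ⟨i, hi⟩ := hex
    have h1 : a * 1 ≤ α ((i : ℕ) + 1) * (x i : ℝ) := by
      apply mul_le_mul (haα i) (by exact_mod_cast hi) one_pos.le (hαmem i).1.le
    have h2 : α ((i : ℕ) + 1) * (x i : ℝ) ≤ Sx n α x := by
      refine Finset.single_le_sum (f := fun j : Fin n => α ((j : ℕ) + 1) * (x j : ℝ))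
        (fun j _ => mul_nonneg (hαmem j).1.le (Nat.cast_nonneg _)) (Finset.mem_univ i)
    linarith
  have hSsum : ∀ x : Fin n → ℕ, Summable (bb (Sx n α x)) := by
    intro x
    rcases (hS0 x).eq_or_lt with h | h
    · rw [← h]; exact bb_summable_zero
    · exact bb_summable _ h
  have hwnn : ∀ x : Fin n → ℕ, 0 ≤ wx n t α l x := by
    intro x
    apply mul_nonneg (mul_nonneg (Nat.cast_nonneg _) (Real.rpow_nonneg hl.le _))
    exact Finset.prod_nonneg fun i _ => pow_nonneg (hd0 i).le _
  -- multinomial rewriting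
  have hmul : ∀ (r : ℕ) (x : Fin n → ℕ), x ∈ Finset.Nat.antidiagonalTuple n r →
      ((r.factorial : ℝ) / ∏ i : Fin n, ((x i).factorial : ℝ)) =
        (Nat.multinomial Finset.univ x : ℝ) := by
    intro r x hx
    have hsum : ∑ i, x i = r := Finset.Nat.mem_antidiagonalTuple.1 hx
    have hspec := Nat.multinomial_spec Finset.univ x
    rw [hsum] at hspec
    have hne : (∏ i : Fin n, ((x i).factorial : ℝ)) ≠ 0 :=
      Finset.prod_ne_zero_iff.2 fun i _ => Nat.cast_ne_zero.2 (x i).factorial_ne_zero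
    rw [div_eq_iff hne]
    have h2 : ((∏ i : Fin n, (x i).factorial : ℕ) : ℝ) * (Nat.multinomial Finset.univ x : ℝ) =
        (r.factorial : ℝ) := by exact_mod_cast congrArg (Nat.cast : ℕ → ℝ) hspec
    push_cast at h2
    linear_combination -h2
  -- the pmf as a fiberwise sum of `gg`
  have hpmf : ∀ m, gsfppPmf n t α l m = ∑' r, gg n t α l (r, m) := by
    intro m
    have h1 : ∀ r : ℕ,
        (∑ x ∈ Finset.Nat.antidiagonalTuple n r,
          ((r.factorial : ℝ) / ∏ i : Fin n, ((x i).factorial : ℝ)) *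
            l ^ (∑ i : Fin n, α ((i : ℕ) + 1) * (x i : ℝ)) *
            fallingFactorial (∑ i : Fin n, α ((i : ℕ) + 1) * (x i : ℝ)) m *
            ∏ i : Fin n, (t ((i : ℕ) + 1) - t (i : ℕ)) ^ (x i)) =
        ∑ x ∈ Finset.Nat.antidiagonalTuple n r,
          wx n t α l x * fallingFactorial (Sx n α x) m := by
      intro r
      refine Finset.sum_congr rfl fun x hx => ?_
      rw [hmul r x hx, wx, Sx]
      ring
    rw [gsfppPmf]
    simp only [h1]
    rw [show (fun r => gg n t α l (r, m)) = fun r =>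
        ((-1 : ℝ) ^ m / (m.factorial : ℝ)) *
          (((-1 : ℝ) ^ r / (r.factorial : ℝ)) *
            ∑ x ∈ Finset.Nat.antidiagonalTuple n r,
              wx n t α l x * fallingFactorial (Sx n α x) m) from rfl]
    rw [tsum_mul_left]
  -- constants
  set D : ℝ := ∑ i : Fin n, (t ((i : ℕ) + 1) - t (i : ℕ)) with hD
  have hD0 : 0 < D := Finset.sum_pos (fun i _ => hd0 i) Finset.univ_nonempty
  set Q : ℝ := Real.exp 1 * max 1 l * D with hQ
  have hQ0 : 0 < Q :=
    mul_pos (mul_pos (Real.exp_pos 1) (lt_of_lt_of_le one_pos (le_max_left 1 l))) hD0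
  have h1a : (0:ℝ) < 1 + 1/a := by
    have h := one_div_pos.2 ha0
    linarith
  set Ψ : ℕ → ℝ := fun r => (1 + 1/a) * ((r : ℝ) + 1) * Q ^ r / r.factorial with hΨ
  set Maj : ℕ → ℕ → ℝ := fun r m =>
    (1 / (r.factorial : ℝ)) * ∑ x ∈ Finset.Nat.antidiagonalTuple n r,
      wx n t α l x * bb (Sx n α x) m with hMaj
  have hMajsum : ∀ r, Summable (Maj r) := by
    intro r
    simp only [hMaj]
    exact (summable_sum (fun x _ => (hSsum x).mul_left (wx n t α l x))).mul_left _
  -- pointwise bound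
  have habs_le : ∀ r m, |gg n t α l (r, m)| ≤ Maj r m := by
    intro r m
    simp only [gg, hMaj]
    rw [abs_mul, abs_mul, abs_div, abs_div, abs_pow, abs_pow, abs_neg, abs_one,
      Nat.abs_cast, Nat.abs_cast]
    simp only [one_pow]
    have h1 : |∑ x ∈ Finset.Nat.antidiagonalTuple n r,
        wx n t α l x * fallingFactorial (Sx n α x) m| ≤
        ∑ x ∈ Finset.Nat.antidiagonalTuple n r,
          wx n t α l x * |fallingFactorial (Sx n α x) m| := by
      refine (Finset.abs_sum_le_sum_abs _ _).trans (le_of_eq ?_)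
      exact Finset.sum_congr rfl fun x _ => by rw [abs_mul, abs_of_nonneg (hwnn x)]
    have hmf : (0:ℝ) ≤ 1 / (m.factorial : ℝ) := by positivity
    have hrf : (0:ℝ) ≤ 1 / (r.factorial : ℝ) := by positivity
    calc 1 / (m.factorial : ℝ) * (1 / (r.factorial : ℝ) *
          |∑ x ∈ Finset.Nat.antidiagonalTuple n r,
            wx n t α l x * fallingFactorial (Sx n α x) m|)
        ≤ 1 / (m.factorial : ℝ) * (1 / (r.factorial : ℝ) *
          ∑ x ∈ Finset.Nat.antidiagonalTuple n r,
            wx n t α l x * |fallingFactorial (Sx n α x) m|) := by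
          exact mul_le_mul_of_nonneg_left (mul_le_mul_of_nonneg_left h1 hrf) hmf
      _ = 1 / (r.factorial : ℝ) * ∑ x ∈ Finset.Nat.antidiagonalTuple n r,
            wx n t α l x * bb (Sx n α x) m := by
          rw [Finset.mul_sum, Finset.mul_sum, Finset.mul_sum]
          refine Finset.sum_congr rfl fun x _ => ?_
          simp only [bb]
          ring
  -- summable fibers (absolute values)
  have hfab : ∀ r, Summable (fun m => |gg n t α l (r, m)|) := fun r =>
    Summable.of_nonneg_of_le (fun m => abs_nonneg _) (fun m => habs_le r m) (hMajsum r)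
  have hfib : ∀ r, Summable (fun m => gg n t α l (r, m)) := fun r => (hfab r).of_abs
  -- bound on the fiberwise tsums
  have htsum_fiber_le : ∀ r, (∑' m, |gg n t α l (r, m)|) ≤ Ψ r := by
    intro r
    have hstep1 : (∑' m, |gg n t α l (r, m)|) ≤ ∑' m, Maj r m :=
      Summable.tsum_le_tsum (fun m => habs_le r m) (hfab r) (hMajsum r)
    have hstep2 : (∑' m, Maj r m) = 1 / (r.factorial : ℝ) *
        ∑ x ∈ Finset.Nat.antidiagonalTuple n r,
          wx n t α l x * ∑' m, bb (Sx n α x) m := by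
      simp only [hMaj]
      rw [tsum_mul_left]
      congr 1
      rw [Summable.tsum_finsetSum (fun x _ => (hSsum x).mul_left (wx n t α l x))]
      exact Finset.sum_congr rfl fun x _ => tsum_mul_left
    have hBx : ∀ x ∈ Finset.Nat.antidiagonalTuple n r,
        (∑' m, bb (Sx n α x) m) ≤ (1 + 1/a) * ((r:ℝ)+1) * (Real.exp 1)^r := by
      intro x hx
      rcases eq_or_ne r 0 with hr | hr
      · subst hr
        have hsum0 : ∑ i, x i = 0 := Finset.Nat.mem_antidiagonalTuple.1 hx
        have hx0 : ∀ i, x i = 0 := fun i =>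
          (Finset.sum_eq_zero_iff).1 hsum0 i (Finset.mem_univ i)
        have hS00 : Sx n α x = 0 := by
          simp [Sx, hx0]
        rw [hS00]
        have h2 : (1:ℝ) ≤ (1 + 1/a) * ((0:ℕ)+1 : ℝ) * (Real.exp 1)^(0:ℕ) := by
          simp
          linarith [one_div_pos.2 ha0]
        exact bb_tsum_zero_le.trans (by exact_mod_cast h2)
      · have hS : 0 < Sx n α x := lt_of_lt_of_le ha0 (haSr r x hx hr)
        have h2 := bb_tsum_le _ hS r (hSler r x hx)
        have hexp : Real.exp (r:ℝ) = Real.exp 1 ^ r := by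
          rw [← Real.exp_nat_mul, mul_one]
        have h3 : 1 + 1/(Sx n α x) ≤ 1 + 1/a := by
          have := one_div_le_one_div_of_le ha0 (haSr r x hx hr)
          linarith
        have h30 : 0 ≤ 1 + 1/(Sx n α x) := by
          have := one_div_pos.2 hS
          linarith
        calc (∑' m, bb (Sx n α x) m) ≤ (r:ℝ) * Real.exp r * (1 + 1/(Sx n α x)) := h2
          _ ≤ ((r:ℝ)+1) * Real.exp r * (1 + 1/a) := by
              refine mul_le_mul ?_ h3 h30 (by positivity)
              exact mul_le_mul (by linarith) le_rfl (Real.exp_pos _).le (by positivity)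
          _ = (1 + 1/a) * ((r:ℝ)+1) * (Real.exp 1)^r := by rw [hexp]; ring
    have hlx : ∀ x ∈ Finset.Nat.antidiagonalTuple n r,
        l ^ (Sx n α x) ≤ (max 1 l)^r := by
      intro x hx
      rcases le_or_gt 1 l with h1l | h1l
      · calc l ^ (Sx n α x) ≤ l ^ ((r:ℕ):ℝ) :=
              Real.rpow_le_rpow_of_exponent_le h1l (hSler r x hx)
          _ = l ^ r := Real.rpow_natCast l r
          _ ≤ (max 1 l)^r := pow_le_pow_left₀ hl.le (le_max_right 1 l) r
      · calc l ^ (Sx n α x) ≤ 1 := Real.rpow_le_one hl.le h1l.le (hS0 x)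
          _ = (1:ℝ)^r := (one_pow r).symm
          _ ≤ (max 1 l)^r := pow_le_pow_left₀ one_pos.le (le_max_left 1 l) r
    have hterm : ∀ x ∈ Finset.Nat.antidiagonalTuple n r,
        wx n t α l x * (∑' m, bb (Sx n α x) m) ≤
          ((Nat.multinomial Finset.univ x : ℝ) *
              ∏ i : Fin n, (t ((i : ℕ) + 1) - t (i : ℕ)) ^ (x i)) *
            ((max 1 l)^r * ((1 + 1/a) * ((r:ℝ)+1) * (Real.exp 1)^r)) := by
      intro x hx
      have hC0 : (0:ℝ) ≤ (1 + 1/a) * ((r:ℝ)+1) * (Real.exp 1)^r := by positivity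
      have hmnn : (0:ℝ) ≤ (Nat.multinomial Finset.univ x : ℝ) *
          ∏ i : Fin n, (t ((i : ℕ) + 1) - t (i : ℕ)) ^ (x i) :=
        mul_nonneg (Nat.cast_nonneg _)
          (Finset.prod_nonneg fun i _ => pow_nonneg (hd0 i).le _)
      calc wx n t α l x * (∑' m, bb (Sx n α x) m)
          ≤ wx n t α l x * ((1 + 1/a) * ((r:ℝ)+1) * (Real.exp 1)^r) :=
            mul_le_mul_of_nonneg_left (hBx x hx) (hwnn x)
        _ = (((Nat.multinomial Finset.univ x : ℝ) *
              ∏ i : Fin n, (t ((i : ℕ) + 1) - t (i : ℕ)) ^ (x i)) *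
            ((1 + 1/a) * ((r:ℝ)+1) * (Real.exp 1)^r)) * l ^ (Sx n α x) := by
            simp only [wx]
            ring
        _ ≤ (((Nat.multinomial Finset.univ x : ℝ) *
              ∏ i : Fin n, (t ((i : ℕ) + 1) - t (i : ℕ)) ^ (x i)) *
            ((1 + 1/a) * ((r:ℝ)+1) * (Real.exp 1)^r)) * (max 1 l)^r :=
            mul_le_mul_of_nonneg_left (hlx x hx) (mul_nonneg hmnn hC0)
        _ = ((Nat.multinomial Finset.univ x : ℝ) *
              ∏ i : Fin n, (t ((i : ℕ) + 1) - t (i : ℕ)) ^ (x i)) *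
            ((max 1 l)^r * ((1 + 1/a) * ((r:ℝ)+1) * (Real.exp 1)^r)) := by ring
    have hmt : ∑ x ∈ Finset.Nat.antidiagonalTuple n r,
        (Nat.multinomial Finset.univ x : ℝ) *
          ∏ i : Fin n, (t ((i : ℕ) + 1) - t (i : ℕ)) ^ (x i) = D ^ r := by
      rw [← Finset.piAntidiag_univ_fin_eq_antidiagonalTuple r n,
        ← Finset.sum_pow_eq_sum_piAntidiag Finset.univ
          (fun i : Fin n => t ((i : ℕ) + 1) - t (i : ℕ)) r]
    have hsum_le : ∑ x ∈ Finset.Nat.antidiagonalTuple n r,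
        wx n t α l x * (∑' m, bb (Sx n α x) m) ≤
        ((max 1 l)^r * ((1 + 1/a) * ((r:ℝ)+1) * (Real.exp 1)^r)) * D ^ r := by
      calc ∑ x ∈ Finset.Nat.antidiagonalTuple n r,
          wx n t α l x * (∑' m, bb (Sx n α x) m)
          ≤ ∑ x ∈ Finset.Nat.antidiagonalTuple n r,
            ((Nat.multinomial Finset.univ x : ℝ) *
                ∏ i : Fin n, (t ((i : ℕ) + 1) - t (i : ℕ)) ^ (x i)) *
              ((max 1 l)^r * ((1 + 1/a) * ((r:ℝ)+1) * (Real.exp 1)^r)) :=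
            Finset.sum_le_sum hterm
        _ = (∑ x ∈ Finset.Nat.antidiagonalTuple n r,
              (Nat.multinomial Finset.univ x : ℝ) *
                ∏ i : Fin n, (t ((i : ℕ) + 1) - t (i : ℕ)) ^ (x i)) *
              ((max 1 l)^r * ((1 + 1/a) * ((r:ℝ)+1) * (Real.exp 1)^r)) :=
            (Finset.sum_mul _ _ _).symm
        _ = ((max 1 l)^r * ((1 + 1/a) * ((r:ℝ)+1) * (Real.exp 1)^r)) * D ^ r := by
            rw [hmt]; ring
    have hΨeq : Ψ r = 1 / (r.factorial : ℝ) *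
        (((max 1 l)^r * ((1 + 1/a) * ((r:ℝ)+1) * (Real.exp 1)^r)) * D ^ r) := by
      simp only [hΨ, hQ]
      rw [mul_pow, mul_pow]
      ring
    calc (∑' m, |gg n t α l (r, m)|) ≤ ∑' m, Maj r m := hstep1
      _ = 1 / (r.factorial : ℝ) * ∑ x ∈ Finset.Nat.antidiagonalTuple n r,
          wx n t α l x * ∑' m, bb (Sx n α x) m := hstep2
      _ ≤ 1 / (r.factorial : ℝ) *
          (((max 1 l)^r * ((1 + 1/a) * ((r:ℝ)+1) * (Real.exp 1)^r)) * D ^ r) :=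
          mul_le_mul_of_nonneg_left hsum_le (by positivity)
      _ = Ψ r := hΨeq.symm
  -- summability of the majorant
  have hΨsum : Summable Ψ := by
    have h1 : ∀ r : ℕ, Ψ r ≤ ((1 + 1/a) * 2) * ((2*Q)^r / r.factorial) := by
      intro r
      have hr2 : ((r:ℝ)+1) ≤ 2*2^r := by
        have h := (Nat.lt_two_pow_self (n := r+1)).le
        have hcast : ((r+1:ℕ):ℝ) ≤ ((2^(r+1):ℕ):ℝ) := by exact_mod_cast h
        push_cast at hcast
        rw [pow_succ] at hcast
        linarith
      calc Ψ r = (1 + 1/a) * (((r:ℝ)+1) * Q^r) / r.factorial := by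
            simp only [hΨ]; ring
        _ ≤ (1 + 1/a) * (2*2^r*Q^r) / r.factorial := by
            refine (div_le_div_iff_of_pos_right (by positivity)).2 ?_
            exact mul_le_mul_of_nonneg_left
              (mul_le_mul_of_nonneg_right hr2 (pow_nonneg hQ0.le r)) h1a.le
        _ = ((1 + 1/a) * 2) * ((2*Q)^r / r.factorial) := by
            rw [mul_pow]; ring
    refine Summable.of_nonneg_of_le (fun r => ?_) h1
      ((Real.summable_pow_div_factorial (2*Q)).mul_left _)
    · simp only [hΨ]
      exact div_nonneg (mul_nonneg (mul_nonneg h1a.le (by positivity))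
        (pow_nonneg hQ0.le r)) (by positivity)
  have houter : Summable (fun r => ∑' m, |gg n t α l (r, m)|) :=
    Summable.of_nonneg_of_le (fun r => tsum_nonneg fun m => abs_nonneg _)
      htsum_fiber_le hΨsum
  have habssum : Summable (fun p : ℕ × ℕ => |gg n t α l p|) :=
    (summable_prod_of_nonneg (fun p => abs_nonneg _)).2 ⟨hfab, houter⟩
  have hgsum : Summable (gg n t α l) := habssum.of_abs
  -- alternating-series fiber sums
  have haltsum : ∀ x : Fin n → ℕ, Summable (alt (Sx n α x)) := by
    intro x
    rcases (hS0 x).eq_or_lt with h | h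
    · rw [← h]; exact alt_summable_zero
    · exact alt_summable _ h
  have hggalt : ∀ r m, gg n t α l (r, m) =
      ((-1:ℝ)^r / (r.factorial : ℝ)) * ∑ x ∈ Finset.Nat.antidiagonalTuple n r,
        wx n t α l x * alt (Sx n α x) m := by
    intro r m
    simp only [gg, alt]
    rw [Finset.mul_sum, Finset.mul_sum, Finset.mul_sum]
    exact Finset.sum_congr rfl fun x _ => by ring
  have hFval : ∀ r, (∑' m, gg n t α l (r, m)) = if r = 0 then (1:ℝ) else 0 := by
    intro r
    have h3 : (∑' m, gg n t α l (r, m)) =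
        ((-1:ℝ)^r / (r.factorial : ℝ)) * ∑ x ∈ Finset.Nat.antidiagonalTuple n r,
          wx n t α l x * ∑' m, alt (Sx n α x) m := by
      rw [tsum_congr (fun m => hggalt r m), tsum_mul_left]
      congr 1
      rw [Summable.tsum_finsetSum (fun x _ => (haltsum x).mul_left (wx n t α l x))]
      exact Finset.sum_congr rfl fun x _ => tsum_mul_left
    rcases eq_or_ne r 0 with hr | hr
    · subst hr
      rw [if_pos rfl, h3]
      rw [Finset.Nat.antidiagonalTuple_zero_right, Finset.sum_singleton]
      have hS00 : Sx n α (0 : Fin n → ℕ) = 0 := by simp [Sx]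
      have hw1 : wx n t α l (0 : Fin n → ℕ) = 1 := by
        simp [wx, hS00, Real.rpow_zero, Nat.multinomial]
      rw [hS00, hw1, alt_tsum_one]
      norm_num
    · rw [if_neg hr, h3]
      have hzero : ∀ x ∈ Finset.Nat.antidiagonalTuple n r,
          wx n t α l x * ∑' m, alt (Sx n α x) m = 0 := fun x hx => by
        rw [alt_tsum_zero _ (lt_of_lt_of_le ha0 (haSr r x hx hr)), mul_zero]
      rw [Finset.sum_eq_zero hzero, mul_zero]
  -- assemble via Fubini
  set A : ℝ := ∑' p : ℕ × ℕ, gg n t α l p with hA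
  have hAhas : HasSum (gg n t α l) A := hgsum.hasSum
  have hFib1 : HasSum (fun r => ∑' m, gg n t α l (r, m)) A :=
    hAhas.prod_fiberwise (fun r => (hfib r).hasSum)
  have hA_eq : A = 1 := by
    have h2 : HasSum (fun r : ℕ => if r = 0 then (1:ℝ) else 0) A :=
      (funext hFval) ▸ hFib1
    exact h2.unique (hasSum_ite_eq 0 1)
  have hswap : Summable (fun p : ℕ × ℕ => gg n t α l p.swap) := hgsum.prod_symm
  have hswapval : (∑' p : ℕ × ℕ, gg n t α l p.swap) = A := by
    rw [hA]
    exact (Equiv.prodComm ℕ ℕ).tsum_eq (gg n t α l)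
  have hswapHas : HasSum (fun p : ℕ × ℕ => gg n t α l p.swap) A :=
    hswapval ▸ hswap.hasSum
  have hfib2 : ∀ m, Summable (fun r => gg n t α l (r, m)) := fun m =>
    hswap.prod_factor m
  have hFib2 : HasSum (fun m => ∑' r, gg n t α l (r, m)) A :=
    hswapHas.prod_fiberwise (fun m => (hfib2 m).hasSum)
  constructor
  · exact (funext hpmf : (fun m : ℕ => gsfppPmf n t α l m) = _) ▸ hFib2.summable
  · rw [tsum_congr hpmf, hFib2.tsum_eq, hA_eq]
end

section
/- For every real θ < 0, the series ∑_{m=0}^∞ e^{θ m} a_m converges and ∑_{m=0}^∞ e^{θ m} a_m = ∏_{k=1}^n exp(−λ^{α_k}(1−e^{θ})^{α_k}(t_k − t_{k−1})). (Moment generating function of the GSFPP-VO.) -/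
noncomputable def bc (s : ℝ) (m : ℕ) : ℝ := fallingFactorial s m / m.factorial

lemma bc_zero (s : ℝ) : bc s 0 = 1 := by simp [bc, fallingFactorial]

lemma bc_succ (s : ℝ) (m : ℕ) : bc s (m + 1) = bc s m * ((s - m) / (m + 1)) := by
  have hm : (m.factorial : ℝ) ≠ 0 := Nat.cast_ne_zero.2 m.factorial_ne_zero
  have hm1 : ((m : ℝ) + 1) ≠ 0 := by positivity
  have h : ((m + 1).factorial : ℝ) = ((m : ℝ) + 1) * m.factorial := by
    rw [Nat.factorial_succ]; push_cast; ring
  simp only [bc, fallingFactorial, h, div_mul_div_comm]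
  rw [mul_comm ((m : ℝ) + 1) (m.factorial : ℝ)]

lemma pow_div_factorial_le_exp {s : ℝ} (hs : 0 ≤ s) (k : ℕ) :
    s ^ k / k.factorial ≤ Real.exp s := by
  calc s ^ k / k.factorial
      ≤ ∑ i ∈ Finset.range (k + 1), s ^ i / i.factorial :=
        Finset.single_le_sum (f := fun i => s ^ i / (i.factorial : ℝ))
          (fun i _ => by positivity) (Finset.self_mem_range_succ k)
    _ ≤ Real.exp s := Real.sum_le_exp_of_nonneg hs _

lemma abs_bc_le_exp {s : ℝ} (hs : 0 ≤ s) (m : ℕ) : |bc s m| ≤ Real.exp s := by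
  suffices H : ∀ m : ℕ, |bc s m| ≤ Real.exp s ∧
      ((m : ℝ) ≤ s + 1 → |bc s m| ≤ s ^ m / m.factorial) from (H m).1
  intro m
  induction m with
  | zero =>
    refine ⟨?_, fun _ => ?_⟩
    · rw [bc_zero, abs_one]; exact Real.one_le_exp hs
    · rw [bc_zero, abs_one]; simp
  | succ m ih =>
    obtain ⟨ih1, ih2⟩ := ih
    by_cases hm : (m : ℝ) ≤ s
    · have h2 : |bc s (m + 1)| ≤ s ^ (m + 1) / (m + 1).factorial := by
        rw [bc_succ, abs_mul]
        have habs : |(s - m) / ((m : ℝ) + 1)| ≤ s / ((m : ℝ) + 1) := by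
          rw [abs_div, abs_of_nonneg (by positivity : (0:ℝ) ≤ (m : ℝ) + 1)]
          apply div_le_div_of_nonneg_right ?_ (by positivity)
          rw [abs_of_nonneg (by linarith)]; linarith
        calc |bc s m| * |(s - m) / ((m : ℝ) + 1)|
            ≤ (s ^ m / m.factorial) * (s / ((m : ℝ) + 1)) :=
              mul_le_mul (ih2 (by linarith)) habs (abs_nonneg _)
                (by positivity)
          _ = s ^ (m + 1) / (m + 1).factorial := by
              rw [Nat.factorial_succ]
              have hm' : (m.factorial : ℝ) ≠ 0 := Nat.cast_ne_zero.2 m.factorial_ne_zero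
              push_cast
              field_simp
              ring
      refine ⟨h2.trans (pow_div_factorial_le_exp hs _), fun _ => by push_cast; exact_mod_cast h2⟩
    · push_neg at hm
      refine ⟨?_, fun h => absurd (by push_cast at h ⊢; linarith) (not_le.2 hm)⟩
      rw [bc_succ, abs_mul]
      have h1 : |(s - m) / ((m : ℝ) + 1)| ≤ 1 := by
        rw [abs_div, abs_of_nonneg (by positivity : (0:ℝ) ≤ (m : ℝ) + 1),
          div_le_one (by positivity), abs_of_nonpos (by linarith)]
        linarith
      calc |bc s m| * |(s - m) / ((m : ℝ) + 1)| ≤ Real.exp s * 1 :=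
            mul_le_mul ih1 h1 (abs_nonneg _) (Real.exp_pos s).le
        _ = Real.exp s := mul_one _

lemma summable_bc_mul_pow {s : ℝ} (hs : 0 ≤ s) {z ρ : ℝ} (hz : |z| ≤ ρ) (hρ : ρ < 1) :
    Summable fun m : ℕ => bc s m * z ^ m := by
  have hρ0 : 0 ≤ ρ := le_trans (abs_nonneg z) hz
  refine Summable.of_norm ?_
  refine Summable.of_nonneg_of_le (fun m => norm_nonneg _)
    (fun m => ?_) ((summable_geometric_of_lt_one hρ0 hρ).mul_left (Real.exp s))
  rw [Real.norm_eq_abs, abs_mul, abs_pow]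
  exact mul_le_mul (abs_bc_le_exp hs m) (pow_le_pow_left₀ (abs_nonneg z) hz m)
    (by positivity) (Real.exp_pos s).le

lemma hasSum_binomial {s q : ℝ} (hs : 0 ≤ s) (hq0 : 0 < q) (hq1 : q < 1) :
    HasSum (fun m : ℕ => bc s m * (-q) ^ m) ((1 - q) ^ s) := by
  set ρ : ℝ := (1 + q) / 2 with hρdef
  have hρ0 : 0 < ρ := by positivity
  have hρ1 : ρ < 1 := by rw [hρdef]; linarith
  have hqρ : q < ρ := by rw [hρdef]; linarith
  set t : Set ℝ := Set.Ioo (-ρ) ρ with htdef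
  have ht_open : IsOpen t := isOpen_Ioo
  have ht_conn : IsPreconnected t := isPreconnected_Ioo
  have ht_conv : Convex ℝ t := convex_Ioo _ _
  have h0t : (0 : ℝ) ∈ t := ⟨by linarith, hρ0⟩
  have hqt : (-q : ℝ) ∈ t := ⟨by linarith, by linarith⟩
  -- the series and its term-wise derivative
  set g : ℕ → ℝ → ℝ := fun m y => bc s m * y ^ m with hgdef
  set g' : ℕ → ℝ → ℝ := fun m y => bc s m * (m * y ^ (m - 1)) with hg'def
  set u : ℕ → ℝ := fun m => Real.exp s * ((m : ℝ) * ρ ^ (m - 1)) with hudef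
  have hu : Summable u := by
    apply Summable.mul_left
    have hnorm : ‖ρ‖ < 1 := by rwa [Real.norm_eq_abs, abs_of_pos hρ0]
    refine Summable.of_nonneg_of_le (fun m => by positivity) (fun m => ?_)
      ((summable_pow_mul_geometric_of_norm_lt_one 1 hnorm).mul_left ρ⁻¹)
    cases m with
    | zero => simp
    | succ m =>
      rw [Nat.succ_sub_one]
      rw [pow_one]
      have : ρ⁻¹ * ((m + 1 : ℕ) * ρ ^ (m + 1)) = ((m : ℝ) + 1) * ρ ^ m := by
        rw [pow_succ]
        field_simp
        push_cast
        ring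
      rw [this]
      push_cast
      exact le_refl _
  have habs_mem : ∀ y ∈ t, |y| ≤ ρ := fun y hy => by
    rw [abs_le]; exact ⟨(hy.1).le, (hy.2).le⟩
  have hg : ∀ (m : ℕ) (y : ℝ), y ∈ t → HasDerivAt (g m) (g' m y) y := by
    intro m y _
    simpa [hgdef, hg'def] using (hasDerivAt_pow m y).const_mul (bc s m)
  have hg' : ∀ (m : ℕ) (y : ℝ), y ∈ t → ‖g' m y‖ ≤ u m := by
    intro m y hy
    rw [hg'def, hudef]
    simp only [Real.norm_eq_abs, abs_mul, abs_pow, Nat.abs_cast]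
    exact mul_le_mul (abs_bc_le_exp hs m)
      (mul_le_mul_of_nonneg_left
        (pow_le_pow_left₀ (abs_nonneg y) (habs_mem y hy) _) (Nat.cast_nonneg m))
      (by positivity) (Real.exp_pos s).le
  have hg0 : Summable fun m => g m 0 := by
    apply summable_of_ne_finset_zero (s := {0})
    intro m hm
    have hm' : m ≠ 0 := by simpa using hm
    simp [hgdef, zero_pow hm']
  have hSg : ∀ y ∈ t, Summable fun m => g m y := fun y hy =>
    summable_bc_mul_pow hs (habs_mem y hy) hρ1
  have hSg' : ∀ y ∈ t, Summable fun m => g' m y := by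
    intro y hy
    refine Summable.of_norm (Summable.of_nonneg_of_le (fun m => norm_nonneg _)
      (fun m => hg' m y hy) hu)
  set F : ℝ → ℝ := fun z => ∑' m, g m z with hFdef
  set D : ℝ → ℝ := fun y => ∑' m, g' m y with hDdef
  have hFderiv : ∀ y ∈ t, HasDerivAt F (D y) y := fun y hy =>
    hasDerivAt_tsum_of_isPreconnected hu ht_open ht_conn hg hg' h0t hg0 hy
  -- key ODE identity
  have hkey : ∀ y ∈ t, (1 + y) * D y = s * F y := by
    intro y hy
    have Sg' := hSg' y hy
    have hDsum : HasSum (fun m => g' m y) (D y) := Sg'.hasSum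
    have hA : HasSum (fun m : ℕ => ((m : ℝ) + 1) * bc s (m + 1) * y ^ m) (D y) := by
      have h0 : ∑ i ∈ Finset.range 1, g' i y = 0 := by simp [hg'def]
      have hshift : HasSum (fun n => g' (n + 1) y)
          (D y - ∑ i ∈ Finset.range 1, g' i y) :=
        (hasSum_nat_add_iff' 1).2 hDsum
      have hfun : (fun n => g' (n + 1) y)
          = fun m : ℕ => ((m : ℝ) + 1) * bc s (m + 1) * y ^ m := by
        funext m; simp only [hg'def, Nat.succ_sub_one]; push_cast; ring
      rw [hfun, h0, sub_zero] at hshift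
      exact hshift
    have hB : HasSum (fun m : ℕ => (m : ℝ) * bc s m * y ^ m) (y * D y) := by
      have h := hDsum.mul_left y
      have hfun : (fun m => y * g' m y) = fun m : ℕ => (m : ℝ) * bc s m * y ^ m := by
        funext m
        cases m with
        | zero => simp [hg'def]
        | succ m => simp only [hg'def, Nat.succ_sub_one]; push_cast; ring
      rwa [hfun] at h
    have hAB := hA.add hB
    have hsF : HasSum (fun m => s * g m y) (s * F y) := (hSg y hy).hasSum.mul_left s
    have hterm : ∀ m : ℕ, ((m : ℝ) + 1) * bc s (m + 1) * y ^ m + (m : ℝ) * bc s m * y ^ m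
        = s * g m y := by
      intro m
      have h1 : ((m : ℝ) + 1) * bc s (m + 1) = (s - m) * bc s m := by
        rw [bc_succ]
        have : ((m : ℝ) + 1) ≠ 0 := by positivity
        field_simp
      rw [h1, hgdef]
      ring
    have hthis : HasSum (fun m => s * g m y) (D y + y * D y) := by
      have hfun : (fun m : ℕ => ((m : ℝ) + 1) * bc s (m + 1) * y ^ m
          + (m : ℝ) * bc s m * y ^ m) = fun m => s * g m y := funext hterm
      rwa [hfun] at hAB
    have heq := hsF.unique hthis
    linarith [heq]
  -- the function Φ y = F y * (1+y)^(-s) has zero derivative on t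
  have hΦderiv : ∀ y ∈ t, HasDerivAt (fun z => F z * (1 + z) ^ (-s)) 0 y := by
    intro y hy
    have h1y : (0 : ℝ) < 1 + y := by have := hy.1; simp only [htdef, Set.mem_Ioo] at hy; linarith [hy.1]
    have hR : HasDerivAt (fun z : ℝ => (1 + z) ^ (-s)) (-s * (1 + y) ^ (-s - 1)) y := by
      have h := HasDerivAt.rpow_const (p := -s)
        ((hasDerivAt_id y).const_add 1) (Or.inl (ne_of_gt h1y))
      simpa [mul_comm] using h
    have hprod := (hFderiv y hy).mul hR
    have hzero : D y * (1 + y) ^ (-s) + F y * (-s * (1 + y) ^ (-s - 1)) = 0 := by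
      have hsplit : (1 + y) ^ (-s) = (1 + y) ^ (-s - 1) * (1 + y) := by
        calc (1 + y) ^ (-s) = (1 + y) ^ (-s - 1 + 1) := by ring_nf
          _ = (1 + y) ^ (-s - 1) * (1 + y) ^ (1 : ℝ) := Real.rpow_add h1y _ _
          _ = (1 + y) ^ (-s - 1) * (1 + y) := by rw [Real.rpow_one]
      rw [hsplit]
      linear_combination ((1 + y) ^ (-s - 1)) * (hkey y hy)
    rw [hzero] at hprod
    exact hprod
  have hconst : F (-q) * (1 + -q) ^ (-s) = F 0 * ((1 : ℝ) + 0) ^ (-s) := by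
    refine ht_conv.is_const_of_fderivWithin_eq_zero (𝕜 := ℝ)
      (f := fun z => F z * (1 + z) ^ (-s)) ?_ ?_ hqt h0t
    · intro y hy
      exact (hΦderiv y hy).differentiableAt.differentiableWithinAt
    · intro y hy
      rw [fderivWithin_of_isOpen ht_open hy, (hΦderiv y hy).hasFDerivAt.fderiv]
      ext z
      simp
  have hF0 : F 0 = 1 := by
    have h1 : F 0 = ∑' m, g m 0 := rfl
    rw [h1, tsum_eq_single 0 ?_]
    · simp [hgdef, bc_zero]
    · intro m hm; simp [hgdef, zero_pow hm]
  have h1q : (0 : ℝ) < 1 - q := by linarith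
  have hFq : F (-q) = (1 - q) ^ s := by
    have hconst' : F (-q) * (1 - q) ^ (-s) = 1 := by
      have : (1 : ℝ) + -q = 1 - q := by ring
      rw [this] at hconst
      rw [hconst, hF0]
      norm_num
    calc F (-q) = ((1 - q) ^ (-s))⁻¹ := eq_inv_of_mul_eq_one_left
          (by linear_combination hconst')
      _ = (1 - q) ^ s := by rw [Real.rpow_neg h1q.le s, inv_inv]
  have hsum := (hSg (-q) hqt).hasSum
  have : (∑' m, g m (-q)) = (1 - q) ^ s := hFq
  rw [this] at hsum
  exact hsum

lemma multinomial_sum_eq (n r : ℕ) (f : Fin n → ℝ) :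
    ∑ x ∈ Finset.Nat.antidiagonalTuple n r,
      ((r.factorial : ℝ) / ∏ i : Fin n, ((x i).factorial : ℝ)) * ∏ i : Fin n, f i ^ x i
      = (∑ i : Fin n, f i) ^ r := by
  rw [Finset.sum_pow_eq_sum_piAntidiag, Finset.piAntidiag_univ_fin_eq_antidiagonalTuple]
  apply Finset.sum_congr rfl
  intro x hx
  have hsum : ∑ i, x i = r := Finset.Nat.mem_antidiagonalTuple.mp hx
  have hprodne : (∏ i : Fin n, ((x i).factorial : ℝ)) ≠ 0 := by positivity
  congr 1
  rw [div_eq_iff hprodne]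
  have hnat : Nat.multinomial Finset.univ x * ∏ i, (x i).factorial = r.factorial := by
    rw [mul_comm, Nat.multinomial_spec, hsum]
  exact_mod_cast hnat.symm

lemma rpow_sum_eq_prod (c : ℝ) (hc : 0 < c) {n : ℕ} (a : Fin n → ℝ) (x : Fin n → ℕ) :
    c ^ (∑ i, a i * (x i : ℝ)) = ∏ i, (c ^ a i) ^ (x i) := by
  rw [Real.rpow_def_of_pos hc, Finset.mul_sum, Real.exp_sum]
  apply Finset.prod_congr rfl
  intro i _
  rw [Real.rpow_def_of_pos hc, ← Real.exp_nat_mul]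
  congr 1
  ring

set_option maxHeartbeats 1000000

/-- for every `θ < 0`, `∑_m e^{θ m} a_m` converges and equals
`∏_{k=1}^n exp(−λ^{α_k}(1−e^{θ})^{α_k}(t_k − t_{k−1}))`.
(Moment generating function of the GSFPP-VO.) -/
theorem gsfppvo_mgf
    (n : ℕ) (hn : 1 ≤ n) (t : ℕ → ℝ)
    (ht0 : t 0 = 0) (htmono : ∀ k < n, t k < t (k + 1))
    (α : ℕ → ℝ) (hα : ∀ k, 1 ≤ k → k ≤ n → α k ∈ Set.Ioo (0 : ℝ) 1)
    (l : ℝ) (hl : 0 < l)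
    (θ : ℝ) (hθ : θ < 0) :
    Summable (fun m : ℕ => Real.exp (θ * m) * gsfppPmf n t α l m) ∧
      ∑' m : ℕ, Real.exp (θ * m) * gsfppPmf n t α l m
        = ∏ k ∈ Finset.Icc 1 n,
            Real.exp (-(l ^ α k * (1 - Real.exp θ) ^ α k * (t k - t (k - 1)))) := by

  classical
  set q := Real.exp θ with hqdef
  have hq0 : 0 < q := Real.exp_pos θ
  have hq1 : q < 1 := Real.exp_lt_one_iff.mpr hθ
  have hc0 : (0 : ℝ) < 1 - q := by linarith
  have hΔ : ∀ i : Fin n, 0 < t ((i : ℕ) + 1) - t (i : ℕ) :=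
    fun i => sub_pos.2 (htmono i i.isLt)
  have hα1 : ∀ i : Fin n, 0 < α ((i : ℕ) + 1) :=
    fun i => (hα _ (Nat.succ_le_succ (Nat.zero_le _)) (Nat.succ_le_of_lt i.isLt)).1
  have hα2 : ∀ i : Fin n, α ((i : ℕ) + 1) < 1 :=
    fun i => (hα _ (Nat.succ_le_succ (Nat.zero_le _)) (Nat.succ_le_of_lt i.isLt)).2
  set s : (Fin n → ℕ) → ℝ := fun x => ∑ i : Fin n, α ((i : ℕ) + 1) * (x i : ℝ) with hsdef
  have hs0 : ∀ x, 0 ≤ s x := fun x =>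
    Finset.sum_nonneg fun i _ => mul_nonneg (hα1 i).le (Nat.cast_nonneg _)
  have hsle : ∀ (r : ℕ) (x : Fin n → ℕ), x ∈ Finset.Nat.antidiagonalTuple n r →
      s x ≤ r := by
    intro r x hx
    have hxr : ∑ i, x i = r := Finset.Nat.mem_antidiagonalTuple.mp hx
    have hcast : ∑ i : Fin n, (x i : ℝ) = (r : ℝ) := by exact_mod_cast congrArg Nat.cast hxr
    rw [hsdef, ← hcast]
    exact Finset.sum_le_sum fun i _ =>
      mul_le_of_le_one_left (Nat.cast_nonneg _) (hα2 i).le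
  set K : ℝ := max 1 (l * Real.exp 1) with hKdef
  have hK1 : (1 : ℝ) ≤ K := le_max_left _ _
  have hlex : ∀ (r : ℕ) (x : Fin n → ℕ), x ∈ Finset.Nat.antidiagonalTuple n r →
      l ^ (s x) * Real.exp (s x) ≤ K ^ r := by
    intro r x hx
    have h1 : l ^ (s x) * Real.exp (s x) = (l * Real.exp 1) ^ (s x) := by
      rw [Real.mul_rpow hl.le (Real.exp_pos 1).le, Real.exp_one_rpow]
    rw [h1]
    calc (l * Real.exp 1) ^ (s x) ≤ K ^ (s x) :=
          Real.rpow_le_rpow (by positivity) (le_max_right _ _) (hs0 x)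
      _ ≤ K ^ (r : ℝ) := Real.rpow_le_rpow_of_exponent_le hK1 (hsle r x hx)
      _ = K ^ r := Real.rpow_natCast K r
  set Y : Fin n → ℝ := fun i =>
    l ^ (α ((i : ℕ) + 1)) * (1 - q) ^ (α ((i : ℕ) + 1)) * (t ((i : ℕ) + 1) - t (i : ℕ))
    with hYdef
  set S : ℝ := K * ∑ i : Fin n, (t ((i : ℕ) + 1) - t (i : ℕ)) with hSdef
  have hS0 : 0 ≤ S := by
    apply mul_nonneg (by linarith)
    exact Finset.sum_nonneg fun i _ => (hΔ i).le
  set T : ℕ → ℕ → ℝ := fun m r =>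
    (q ^ m * ((-1 : ℝ) ^ m / (m.factorial : ℝ))) *
      (((-1 : ℝ) ^ r / (r.factorial : ℝ)) *
        ∑ x ∈ Finset.Nat.antidiagonalTuple n r,
          ((r.factorial : ℝ) / ∏ i : Fin n, ((x i).factorial : ℝ)) *
            l ^ (s x) * fallingFactorial (s x) m *
            ∏ i : Fin n, (t ((i : ℕ) + 1) - t (i : ℕ)) ^ (x i)) with hTdef
  have hpmf : ∀ m : ℕ, Real.exp (θ * m) * gsfppPmf n t α l m = ∑' r, T m r := by
    intro m
    have hexp : Real.exp (θ * m) = q ^ m := by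
      rw [mul_comm, Real.exp_nat_mul]
    rw [hexp, gsfppPmf, ← mul_assoc, ← tsum_mul_left]
  -- bound on the terms
  have hff : ∀ (m : ℕ) (x : Fin n → ℕ),
      |fallingFactorial (s x) m| ≤ Real.exp (s x) * m.factorial := by
    intro m x
    have h := abs_bc_le_exp (hs0 x) m
    rw [bc, abs_div, Nat.abs_cast] at h
    have hm : (0 : ℝ) < (m.factorial : ℝ) := by positivity
    calc |fallingFactorial (s x) m|
        = |fallingFactorial (s x) m| / m.factorial * m.factorial := by field_simp
      _ ≤ Real.exp (s x) * m.factorial := mul_le_mul_of_nonneg_right h hm.le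
  have hTbound : ∀ (m r : ℕ), |T m r| ≤ q ^ m * (S ^ r / r.factorial) := by
    intro m r
    have hmfac : (0 : ℝ) < (m.factorial : ℝ) := by positivity
    have hrfac : (0 : ℝ) < (r.factorial : ℝ) := by positivity
    have h3 : ∀ x : Fin n → ℕ,
        (0 : ℝ) ≤ ∏ i : Fin n, (t ((i : ℕ) + 1) - t (i : ℕ)) ^ (x i) :=
      fun x => Finset.prod_nonneg fun i _ => pow_nonneg (hΔ i).le _
    calc |T m r|
        = (q ^ m / (m.factorial : ℝ)) * ((1 / (r.factorial : ℝ)) *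
            |∑ x ∈ Finset.Nat.antidiagonalTuple n r,
              ((r.factorial : ℝ) / ∏ i : Fin n, ((x i).factorial : ℝ)) *
                l ^ (s x) * fallingFactorial (s x) m *
                ∏ i : Fin n, (t ((i : ℕ) + 1) - t (i : ℕ)) ^ (x i)|) := by
          simp only [hTdef]
          simp only [abs_mul, abs_div, abs_pow, abs_neg, abs_one, one_pow,
            Nat.abs_cast, abs_of_pos hq0]
          ring
      _ ≤ (q ^ m / (m.factorial : ℝ)) * ((1 / (r.factorial : ℝ)) *
            ∑ x ∈ Finset.Nat.antidiagonalTuple n r,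
              ((r.factorial : ℝ) / ∏ i : Fin n, ((x i).factorial : ℝ)) *
                (K ^ r * m.factorial) *
                ∏ i : Fin n, (t ((i : ℕ) + 1) - t (i : ℕ)) ^ (x i)) := by
          apply mul_le_mul_of_nonneg_left ?_ (by positivity)
          apply mul_le_mul_of_nonneg_left ?_ (by positivity)
          refine le_trans (Finset.abs_sum_le_sum_abs _ _) (Finset.sum_le_sum ?_)
          intro x hx
          have h1 : (0 : ℝ) ≤ (r.factorial : ℝ) / ∏ i : Fin n, ((x i).factorial : ℝ) := by
            positivity
          have h2 : (0 : ℝ) ≤ l ^ (s x) := Real.rpow_nonneg hl.le _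
          rw [abs_mul, abs_mul, abs_mul, abs_of_nonneg h1, abs_of_nonneg h2,
            abs_of_nonneg (h3 x)]
          have hmid : l ^ (s x) * |fallingFactorial (s x) m| ≤ K ^ r * m.factorial := by
            calc l ^ (s x) * |fallingFactorial (s x) m|
                ≤ l ^ (s x) * (Real.exp (s x) * m.factorial) :=
                  mul_le_mul_of_nonneg_left (hff m x) h2
              _ = (l ^ (s x) * Real.exp (s x)) * m.factorial := by ring
              _ ≤ K ^ r * m.factorial :=
                  mul_le_mul_of_nonneg_right (hlex r x hx) hmfac.le
          calc ((r.factorial : ℝ) / ∏ i : Fin n, ((x i).factorial : ℝ)) *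
                l ^ (s x) * |fallingFactorial (s x) m| *
                ∏ i : Fin n, (t ((i : ℕ) + 1) - t (i : ℕ)) ^ (x i)
              = ((r.factorial : ℝ) / ∏ i : Fin n, ((x i).factorial : ℝ)) *
                (l ^ (s x) * |fallingFactorial (s x) m|) *
                ∏ i : Fin n, (t ((i : ℕ) + 1) - t (i : ℕ)) ^ (x i) := by ring
            _ ≤ ((r.factorial : ℝ) / ∏ i : Fin n, ((x i).factorial : ℝ)) *
                (K ^ r * m.factorial) *
                ∏ i : Fin n, (t ((i : ℕ) + 1) - t (i : ℕ)) ^ (x i) :=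
                mul_le_mul_of_nonneg_right
                  (mul_le_mul_of_nonneg_left hmid h1) (h3 x)
      _ = q ^ m * (S ^ r / r.factorial) := by
          have hsum : ∑ x ∈ Finset.Nat.antidiagonalTuple n r,
              ((r.factorial : ℝ) / ∏ i : Fin n, ((x i).factorial : ℝ)) *
                (K ^ r * m.factorial) *
                ∏ i : Fin n, (t ((i : ℕ) + 1) - t (i : ℕ)) ^ (x i)
              = (K ^ r * m.factorial) *
                ∑ x ∈ Finset.Nat.antidiagonalTuple n r,
                  ((r.factorial : ℝ) / ∏ i : Fin n, ((x i).factorial : ℝ)) *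
                    ∏ i : Fin n, (t ((i : ℕ) + 1) - t (i : ℕ)) ^ (x i) := by
            rw [Finset.mul_sum]
            exact Finset.sum_congr rfl fun x _ => by ring
          rw [hsum, multinomial_sum_eq, hSdef, mul_pow]
          field_simp
  have hBsum : Summable (fun p : ℕ × ℕ => q ^ p.1 * (S ^ p.2 / (p.2.factorial : ℝ))) :=
    (summable_geometric_of_lt_one hq0.le hq1).mul_of_nonneg
      (Real.summable_pow_div_factorial S)
      (fun m => pow_nonneg hq0.le m)
      (fun r => div_nonneg (pow_nonneg hS0 r) (Nat.cast_nonneg _))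
  have hTsum : Summable (Function.uncurry T) := by
    rw [← summable_abs_iff]
    exact Summable.of_nonneg_of_le (fun p => abs_nonneg _)
      (fun p => hTbound p.1 p.2) hBsum
  have hfiber : ∀ r : ℕ, ∑' m, T m r = (-(∑ i : Fin n, Y i)) ^ r / r.factorial := by
    intro r
    have hTm : ∀ m : ℕ, T m r =
        ∑ x ∈ Finset.Nat.antidiagonalTuple n r,
          (((-1 : ℝ) ^ r / (r.factorial : ℝ)) *
            (((r.factorial : ℝ) / ∏ i : Fin n, ((x i).factorial : ℝ)) *
              ∏ i : Fin n, (t ((i : ℕ) + 1) - t (i : ℕ)) ^ (x i)) * l ^ (s x)) *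
          (bc (s x) m * (-q) ^ m) := by
      intro m
      simp only [hTdef]
      rw [← mul_assoc, Finset.mul_sum]
      apply Finset.sum_congr rfl
      intro x _
      have hm : ((m.factorial : ℝ)) ≠ 0 := by positivity
      simp only [bc]
      rw [neg_pow q m]
      ring
    have hsumm : ∀ x ∈ Finset.Nat.antidiagonalTuple n r,
        Summable fun m : ℕ =>
          (((-1 : ℝ) ^ r / (r.factorial : ℝ)) *
            (((r.factorial : ℝ) / ∏ i : Fin n, ((x i).factorial : ℝ)) *
              ∏ i : Fin n, (t ((i : ℕ) + 1) - t (i : ℕ)) ^ (x i)) * l ^ (s x)) *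
          (bc (s x) m * (-q) ^ m) :=
      fun x _ => ((hasSum_binomial (hs0 x) hq0 hq1).summable).mul_left _
    calc ∑' m, T m r
        = ∑' m, ∑ x ∈ Finset.Nat.antidiagonalTuple n r,
            (((-1 : ℝ) ^ r / (r.factorial : ℝ)) *
              (((r.factorial : ℝ) / ∏ i : Fin n, ((x i).factorial : ℝ)) *
                ∏ i : Fin n, (t ((i : ℕ) + 1) - t (i : ℕ)) ^ (x i)) * l ^ (s x)) *
            (bc (s x) m * (-q) ^ m) := tsum_congr hTm
      _ = ∑ x ∈ Finset.Nat.antidiagonalTuple n r, ∑' m : ℕ,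
            (((-1 : ℝ) ^ r / (r.factorial : ℝ)) *
              (((r.factorial : ℝ) / ∏ i : Fin n, ((x i).factorial : ℝ)) *
                ∏ i : Fin n, (t ((i : ℕ) + 1) - t (i : ℕ)) ^ (x i)) * l ^ (s x)) *
            (bc (s x) m * (-q) ^ m) := Summable.tsum_finsetSum hsumm
      _ = ∑ x ∈ Finset.Nat.antidiagonalTuple n r,
            (((-1 : ℝ) ^ r / (r.factorial : ℝ)) *
              (((r.factorial : ℝ) / ∏ i : Fin n, ((x i).factorial : ℝ)) *
                ∏ i : Fin n, (t ((i : ℕ) + 1) - t (i : ℕ)) ^ (x i)) * l ^ (s x)) *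
            ((1 - q) ^ (s x)) := by
          refine Finset.sum_congr rfl fun x hx => ?_
          rw [tsum_mul_left, (hasSum_binomial (hs0 x) hq0 hq1).tsum_eq]
      _ = ((-1 : ℝ) ^ r / (r.factorial : ℝ)) *
            ∑ x ∈ Finset.Nat.antidiagonalTuple n r,
              ((r.factorial : ℝ) / ∏ i : Fin n, ((x i).factorial : ℝ)) *
                ∏ i : Fin n, (Y i) ^ (x i) := by
          rw [Finset.mul_sum]
          refine Finset.sum_congr rfl fun x _ => ?_
          have h1 : l ^ (s x) = ∏ i : Fin n, (l ^ α ((i : ℕ) + 1)) ^ (x i) := by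
            rw [hsdef]; exact rpow_sum_eq_prod l hl _ x
          have h2 : (1 - q) ^ (s x) = ∏ i : Fin n, ((1 - q) ^ α ((i : ℕ) + 1)) ^ (x i) := by
            rw [hsdef]; exact rpow_sum_eq_prod _ hc0 _ x
          have h3 : ∏ i : Fin n, (Y i) ^ (x i)
              = (∏ i : Fin n, (l ^ α ((i : ℕ) + 1)) ^ (x i)) *
                ((∏ i : Fin n, ((1 - q) ^ α ((i : ℕ) + 1)) ^ (x i)) *
                 (∏ i : Fin n, (t ((i : ℕ) + 1) - t (i : ℕ)) ^ (x i))) := by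
            rw [← Finset.prod_mul_distrib, ← Finset.prod_mul_distrib]
            refine Finset.prod_congr rfl fun i _ => ?_
            simp only [hYdef]
            rw [mul_pow, mul_pow, mul_assoc]
          rw [h1, h2, h3]
          ring
      _ = ((-1 : ℝ) ^ r / (r.factorial : ℝ)) * (∑ i : Fin n, Y i) ^ r := by
          rw [multinomial_sum_eq]
      _ = (-(∑ i : Fin n, Y i)) ^ r / r.factorial := by
          rw [neg_pow]
          ring
  have hmarg : Summable fun m : ℕ => ∑' r, T m r := hTsum.prod
  constructor
  · exact hmarg.congr fun m => (hpmf m).symm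
  · calc ∑' m : ℕ, Real.exp (θ * m) * gsfppPmf n t α l m
        = ∑' m, ∑' r, T m r := tsum_congr hpmf
      _ = ∑' r, ∑' m, T m r := (Summable.tsum_comm hTsum).symm
      _ = ∑' r, (-(∑ i : Fin n, Y i)) ^ r / r.factorial := tsum_congr hfiber
      _ = Real.exp (-(∑ i : Fin n, Y i)) := by
          rw [Real.exp_eq_exp_ℝ, NormedSpace.exp_eq_tsum_div]
      _ = ∏ i : Fin n, Real.exp (-(Y i)) := by
          rw [← Real.exp_sum]
          congr 1
          rw [← Finset.sum_neg_distrib]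
      _ = ∏ k ∈ Finset.Icc 1 n,
            Real.exp (-(l ^ α k * (1 - q) ^ α k * (t k - t (k - 1)))) := by
          rw [← Finset.Ico_add_one_right_eq_Icc, Finset.prod_Ico_eq_prod_range]
          simp only [Nat.add_sub_cancel, Nat.add_sub_cancel_left]
          simp only [hYdef]
          rw [Fin.prod_univ_eq_prod_range (fun j : ℕ =>
            Real.exp (-(l ^ α (j + 1) * (1 - q) ^ α (j + 1) * (t (j + 1) - t j)))) n]
          exact Finset.prod_congr rfl fun k _ => by rw [add_comm 1 k]
end

section
/- For t ∈ (t_{n−1}, t_n), let a_m(t) denote the coefficient a_m computed for the partition 0 = t_0 < t_1 < ⋯ < t_{n−1} < t (i.e., with t_n replaced by t). Then for each m ∈ ℕ, the function t ↦ a_m(t) is differentiable on (t_{n−1}, t_n) and satisfies the fractional difference-differential equation d/dt a_m(t) = −λ^{α_n} ∑_{r=0}^m ((−1)^r / r!) (Γ(α_n+1)/Γ(α_n+1−r)) a_{m−r}(t), where Γ is the real Gamma function. -/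
namespace GsfppAux

open Finset Real

lemma ff_abs_le (b : ℝ) : ∀ m : ℕ, |fallingFactorial b m| ≤ (|b| + m) ^ m
  | 0 => by simp [fallingFactorial]
  | m + 1 => by
    have h1 : |fallingFactorial b m| ≤ (|b| + m) ^ m := ff_abs_le b m
    have hb : (0:ℝ) ≤ |b| := abs_nonneg b
    have habs : |b - (m:ℝ)| ≤ |b| + (m+1) := by
      have := abs_sub b (m:ℝ)
      rw [abs_of_nonneg (Nat.cast_nonneg m : (0:ℝ) ≤ m)] at this
      linarith
    calc |fallingFactorial b (m+1)| = |fallingFactorial b m| * |b - m| := by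
          rw [fallingFactorial, abs_mul]
      _ ≤ (|b| + m) ^ m * (|b| + (m+1)) :=
          mul_le_mul h1 habs (abs_nonneg _) (by positivity)
      _ ≤ (|b| + (m+1)) ^ m * (|b| + (m+1)) := by
          have : (|b| + (m:ℝ)) ^ m ≤ (|b| + (m+1)) ^ m := by gcongr <;> linarith
          have h2 : (0:ℝ) ≤ |b| + (m+1) := by positivity
          exact mul_le_mul_of_nonneg_right this h2
      _ = (|b| + ((m:ℕ)+1:ℕ)) ^ (m+1) := by push_cast; rw [pow_succ]

lemma ff_add (a b : ℝ) : ∀ p : ℕ, fallingFactorial (a + b) p =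
    ∑ j ∈ range (p + 1), (p.choose j : ℝ) * fallingFactorial a j * fallingFactorial b (p - j)
  | 0 => by simp [fallingFactorial]
  | p + 1 => by
    have IH := ff_add a b p
    rw [fallingFactorial, IH, sum_mul]
    have key : ∀ j ∈ range (p + 1),
        (p.choose j : ℝ) * fallingFactorial a j * fallingFactorial b (p - j) * (a + b - p)
        = ((p.choose j : ℝ) * fallingFactorial a (j+1) * fallingFactorial b (p - j))
          + ((p.choose j : ℝ) * fallingFactorial a j * fallingFactorial b (p - j + 1)) := by
      intro j hj
      rw [mem_range] at hj
      have h1 : fallingFactorial a (j+1) = fallingFactorial a j * (a - j) := rfl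
      have h2 : fallingFactorial b (p - j + 1) = fallingFactorial b (p - j) * (b - ((p - j : ℕ):ℝ)) := rfl
      have hc : ((p - j : ℕ) : ℝ) = (p : ℝ) - j := by
        have : j ≤ p := Nat.lt_succ_iff.mp hj
        push_cast [this]; ring
      rw [h1, h2, hc]
      ring
    rw [sum_congr rfl key, sum_add_distrib]
    have RHSeq : ∑ j ∈ range (p + 1 + 1), ((p+1).choose j : ℝ) * fallingFactorial a j * fallingFactorial b (p + 1 - j)
        = (∑ j ∈ range (p + 1), ((p+1).choose (j+1) : ℝ) * fallingFactorial a (j+1) * fallingFactorial b (p - j))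
          + fallingFactorial b (p + 1) := by
      rw [sum_range_succ']
      congr 1
      · apply sum_congr rfl; intro j hj; rw [mem_range] at hj
        have : p + 1 - (j + 1) = p - j := by omega
        rw [this]
      · show ((p+1).choose 0 : ℝ) * fallingFactorial a 0 * fallingFactorial b (p + 1 - 0) = _
        simp [fallingFactorial]
    rw [RHSeq]
    have pascal : ∀ j ∈ range (p+1), ((p+1).choose (j+1) : ℝ) * fallingFactorial a (j+1) * fallingFactorial b (p - j)
        = (p.choose j : ℝ) * fallingFactorial a (j+1) * fallingFactorial b (p - j)
          + (p.choose (j+1) : ℝ) * fallingFactorial a (j+1) * fallingFactorial b (p - j) := by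
      intro j _
      rw [Nat.choose_succ_succ]
      push_cast; ring
    rw [sum_congr rfl pascal, sum_add_distrib]
    have h3 : ∑ j ∈ range (p+1), (p.choose (j+1) : ℝ) * fallingFactorial a (j+1) * fallingFactorial b (p - j)
        = ∑ j ∈ range p, (p.choose (j+1) : ℝ) * fallingFactorial a (j+1) * fallingFactorial b (p - j) := by
      rw [sum_range_succ, Nat.choose_succ_self]
      simp
    have h4 : ∑ j ∈ range (p+1), (p.choose j : ℝ) * fallingFactorial a j * fallingFactorial b (p - j + 1)
        = (∑ j ∈ range p, (p.choose (j+1) : ℝ) * fallingFactorial a (j+1) * fallingFactorial b (p - j))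
          + fallingFactorial b (p + 1) := by
      rw [sum_range_succ']
      congr 1
      · apply sum_congr rfl; intro j hj; rw [mem_range] at hj
        have : p - (j + 1) + 1 = p - j := by omega
        rw [this]
      · show (p.choose 0 : ℝ) * fallingFactorial a 0 * fallingFactorial b (p - 0 + 1) = _
        simp [fallingFactorial]
    rw [h3, h4]
    ring

lemma gamma_ratio {a : ℝ} (ha : a ∈ Set.Ioo (0:ℝ) 1) :
    ∀ r : ℕ, Real.Gamma (a + 1) / Real.Gamma (a + 1 - r) = fallingFactorial a r
  | 0 => by
    simp [fallingFactorial, div_self (Real.Gamma_pos_of_pos (by linarith [ha.1] : (0:ℝ) < a + 1)).ne']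
  | r + 1 => by
    have IH := gamma_ratio ha r
    have key : ∀ c : ℝ, (∃ z : ℤ, c = a - z) → Real.Gamma c ≠ 0 := by
      rintro c ⟨z, rfl⟩
      apply Real.Gamma_ne_zero
      intro k hk
      have hz : a = ((z - k : ℤ) : ℝ) := by push_cast; push_cast at hk; linarith
      have h0 : (0:ℝ) < ((z - k : ℤ) : ℝ) := hz ▸ ha.1
      have h1 : ((z - k : ℤ) : ℝ) < 1 := hz ▸ ha.2
      have h0' : (0:ℤ) < z - k := by exact_mod_cast h0
      have h1' : z - k < (1:ℤ) := by exact_mod_cast h1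
      omega
    have hne : a - r ≠ 0 := by
      intro hc
      have : a = ((r:ℤ):ℝ) := by push_cast; linarith
      have h0 : (0:ℝ) < ((r:ℤ):ℝ) := this ▸ ha.1
      have h1 : ((r:ℤ):ℝ) < 1 := this ▸ ha.2
      have h0' : (0:ℤ) < r := by exact_mod_cast h0
      have h1' : (r:ℤ) < 1 := by exact_mod_cast h1
      omega
    have hGne : Real.Gamma (a + 1 - r) ≠ 0 := key _ ⟨(r:ℤ) - 1, by push_cast; ring⟩
    have hGne' : Real.Gamma (a - r) ≠ 0 := key _ ⟨(r:ℤ), by push_cast; ring⟩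
    have hrec : Real.Gamma (a + 1 - r) = (a - r) * Real.Gamma (a - r) := by
      have h' : a + 1 - r = (a - r) + 1 := by ring
      rw [h', Real.Gamma_add_one hne]
    have hIH' : Real.Gamma (a + 1) = fallingFactorial a r * Real.Gamma (a + 1 - r) :=
      (div_eq_iff hGne).mp IH
    have hcast : a + 1 - ((r:ℕ)+1:ℕ) = a - r := by push_cast; ring
    rw [hcast, hIH', hrec]
    show fallingFactorial a r * ((a - ↑r) * Real.Gamma (a - ↑r)) / Real.Gamma (a - ↑r)
      = fallingFactorial a r * (a - ↑r)
    field_simp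

-- cast of multinomial coefficient
lemma mult_cast {n r : ℕ} {x : Fin n → ℕ} (hx : ∑ i, x i = r) :
    ((r.factorial : ℝ) / ∏ i : Fin n, ((x i).factorial : ℝ))
      = (Nat.multinomial Finset.univ x : ℝ) := by
  have hspec := Nat.multinomial_spec (Finset.univ : Finset (Fin n)) x
  rw [hx] at hspec
  have hprod : (0:ℝ) < ∏ i : Fin n, ((x i).factorial : ℝ) := by
    apply Finset.prod_pos; intro i _; exact_mod_cast Nat.factorial_pos _
  rw [div_eq_iff hprod.ne']
  rw [← hspec]
  push_cast
  ring

-- multinomial theorem over antidiagonalTuple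
lemma multinomial_thm (n r : ℕ) (c : Fin n → ℝ) :
    ∑ x ∈ Finset.Nat.antidiagonalTuple n r,
      (Nat.multinomial Finset.univ x : ℝ) * ∏ i, c i ^ x i = (∑ i, c i) ^ r := by
  rw [Finset.sum_pow_eq_sum_piAntidiag, Finset.piAntidiag_univ_fin_eq_antidiagonalTuple]

-- the generic bound lemma
lemma sum_bound {n r : ℕ} (c e : Fin n → ℝ) (hce : ∀ i, |c i| ≤ e i)
    (w : (Fin n → ℕ) → ℝ) (W : ℝ) (hW : 0 ≤ W)
    (hw : ∀ x ∈ Finset.Nat.antidiagonalTuple n r, |w x| ≤ W) :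
    |∑ x ∈ Finset.Nat.antidiagonalTuple n r,
        ((r.factorial : ℝ) / ∏ i : Fin n, ((x i).factorial : ℝ)) * (∏ i, c i ^ x i) * w x|
      ≤ W * (∑ i, e i) ^ r := by
  have he : ∀ i, 0 ≤ e i := fun i => le_trans (abs_nonneg _) (hce i)
  calc |∑ x ∈ Finset.Nat.antidiagonalTuple n r,
        ((r.factorial : ℝ) / ∏ i : Fin n, ((x i).factorial : ℝ)) * (∏ i, c i ^ x i) * w x|
      ≤ ∑ x ∈ Finset.Nat.antidiagonalTuple n r,
        |((r.factorial : ℝ) / ∏ i : Fin n, ((x i).factorial : ℝ)) * (∏ i, c i ^ x i) * w x| :=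
        Finset.abs_sum_le_sum_abs _ _
    _ ≤ ∑ x ∈ Finset.Nat.antidiagonalTuple n r,
        (Nat.multinomial Finset.univ x : ℝ) * (∏ i, e i ^ x i) * W := by
        apply Finset.sum_le_sum
        intro x hx
        have hxs : ∑ i, x i = r := (Finset.Nat.mem_antidiagonalTuple.mp hx)
        rw [abs_mul, abs_mul, mult_cast hxs, abs_of_nonneg (by positivity : (0:ℝ) ≤ (Nat.multinomial Finset.univ x : ℝ))]
        have hprod_nonneg : (0:ℝ) ≤ ∏ i, e i ^ x i :=
          Finset.prod_nonneg fun i _ => pow_nonneg (he i) _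
        apply mul_le_mul
        · apply mul_le_mul_of_nonneg_left _ (Nat.cast_nonneg _)
          rw [Finset.abs_prod]
          apply Finset.prod_le_prod
          · intro i _; positivity
          · intro i _; rw [abs_pow]; exact pow_le_pow_left₀ (abs_nonneg _) (hce i) _
        · exact hw x hx
        · exact abs_nonneg _
        · exact mul_nonneg (Nat.cast_nonneg _) hprod_nonneg
    _ = W * (∑ i, e i) ^ r := by
        rw [← multinomial_thm n r e, Finset.mul_sum]
        apply Finset.sum_congr rfl
        intro x _; ring

-- master summability
lemma summable_master (p : ℕ) (a C : ℝ) (ha : 0 ≤ a) (hC : 0 ≤ C) :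
    Summable (fun r : ℕ => ((r : ℝ) + a) ^ p * C ^ r / r.factorial) := by
  have hterm : ∀ r : ℕ, ((r : ℝ) + a) ^ p * C ^ r / r.factorial
      ≤ Real.exp (2 * C) * (2:ℝ)^p * (((r:ℝ)^p + a^p) * (1/2 : ℝ)^r) := by
    intro r
    have h1 : C ^ r / r.factorial ≤ Real.exp (2*C) * (1/2:ℝ)^r := by
      have h2 : (2*C) ^ r / r.factorial ≤ Real.exp (2*C) := by
        calc (2*C) ^ r / r.factorial
            ≤ ∑ i ∈ Finset.range (r+1), (2*C)^i / i.factorial := by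
              exact Finset.single_le_sum (f := fun i : ℕ => (2*C)^i / (i.factorial : ℝ))
                (fun i _ => by positivity) (Finset.self_mem_range_succ r)
          _ ≤ Real.exp (2*C) := Real.sum_le_exp_of_nonneg (by linarith) _
      have h3 : C ^ r = (2*C)^r * (1/2:ℝ)^r := by
        rw [← mul_pow]; ring_nf
      rw [h3]
      calc (2*C)^r * (1/2:ℝ)^r / r.factorial = ((2*C)^r / r.factorial) * (1/2:ℝ)^r := by ring
        _ ≤ Real.exp (2*C) * (1/2:ℝ)^r := by
            apply mul_le_mul_of_nonneg_right h2 (by positivity)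
    have h4 : ((r:ℝ) + a) ^ p ≤ (2:ℝ)^p * ((r:ℝ)^p + a^p) := by
      calc ((r:ℝ) + a)^p ≤ (2 * max (r:ℝ) a)^p := by
            apply pow_le_pow_left₀ (by positivity)
            rcases le_total (r:ℝ) a with h | h
            · rw [max_eq_right h]; linarith
            · rw [max_eq_left h]; linarith
        _ = (2:ℝ)^p * (max (r:ℝ) a)^p := by rw [mul_pow]
        _ ≤ (2:ℝ)^p * ((r:ℝ)^p + a^p) := by
            apply mul_le_mul_of_nonneg_left _ (by positivity)
            rcases le_total (r:ℝ) a with h | h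
            · rw [max_eq_right h]
              linarith [pow_nonneg (Nat.cast_nonneg r : (0:ℝ) ≤ (r:ℝ)) p]
            · rw [max_eq_left h]
              linarith [pow_nonneg ha p]
    calc ((r : ℝ) + a) ^ p * C ^ r / r.factorial
        = ((r : ℝ) + a) ^ p * (C ^ r / r.factorial) := by ring
      _ ≤ ((2:ℝ)^p * ((r:ℝ)^p + a^p)) * (Real.exp (2*C) * (1/2:ℝ)^r) := by
          apply mul_le_mul h4 h1 (by positivity) (by positivity)
      _ = Real.exp (2 * C) * (2:ℝ)^p * (((r:ℝ)^p + a^p) * (1/2 : ℝ)^r) := by ring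
  apply Summable.of_nonneg_of_le (fun r => by positivity) hterm
  apply Summable.mul_left
  have hs1 : Summable (fun r : ℕ => (r:ℝ)^p * (1/2:ℝ)^r) := by
    apply summable_pow_mul_geometric_of_norm_lt_one
    rw [norm_of_nonneg (by norm_num : (0:ℝ) ≤ 1/2)]; norm_num
  have hs2 : Summable (fun r : ℕ => a^p * (1/2:ℝ)^r) :=
    (summable_geometric_of_lt_one (by norm_num) (by norm_num)).mul_left _
  have := hs1.add hs2
  apply this.congr
  intro r; ring


noncomputable def sig (n : ℕ) (α : ℕ → ℝ) (x : Fin n → ℕ) : ℝ :=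
  ∑ i : Fin n, α ((i : ℕ) + 1) * (x i : ℝ)

noncomputable def fT (n : ℕ) (t : ℕ → ℝ) (α : ℕ → ℝ) (l : ℝ) (m r : ℕ) (y : ℝ) : ℝ :=
  ((-1 : ℝ) ^ r / (r.factorial : ℝ)) *
    ∑ x ∈ Finset.Nat.antidiagonalTuple n r,
      ((r.factorial : ℝ) / ∏ i : Fin n, ((x i).factorial : ℝ)) *
        l ^ (sig n α x) * fallingFactorial (sig n α x) m *
        ∏ i : Fin n, (Function.update t n y ((i : ℕ) + 1) - Function.update t n y (i : ℕ)) ^ (x i)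

noncomputable def gT (n : ℕ) (t : ℕ → ℝ) (α : ℕ → ℝ) (l : ℝ) (p r : ℕ) (y : ℝ) : ℝ :=
  ((-1 : ℝ) ^ r / (r.factorial : ℝ)) *
    ∑ x ∈ Finset.Nat.antidiagonalTuple n r,
      ((r.factorial : ℝ) / ∏ i : Fin n, ((x i).factorial : ℝ)) *
        l ^ (sig n α x) * fallingFactorial (sig n α x + α n) p *
        ∏ i : Fin n, (Function.update t n y ((i : ℕ) + 1) - Function.update t n y (i : ℕ)) ^ (x i)

noncomputable def dT (n : ℕ) (t : ℕ → ℝ) (α : ℕ → ℝ) (l : ℝ) (m : ℕ) : ℕ → ℝ → ℝ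
  | 0 => fun _ => 0
  | r + 1 => fun y => -(l ^ α n) * gT n t α l m r y

lemma gsfpp_eq (n : ℕ) (t : ℕ → ℝ) (α : ℕ → ℝ) (l : ℝ) (m : ℕ) (y : ℝ) :
    gsfppPmf n (Function.update t n y) α l m
      = ((-1 : ℝ) ^ m / (m.factorial : ℝ)) * ∑' r : ℕ, fT n t α l m r y := rfl

lemma prod_update_eq {n : ℕ} (hn : 1 ≤ n) (t : ℕ → ℝ) (y : ℝ) (x : Fin n → ℕ) :
    ∏ i : Fin n, (Function.update t n y ((i : ℕ) + 1) - Function.update t n y (i : ℕ)) ^ (x i)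
      = (∏ i ∈ Finset.univ.erase (⟨n - 1, by omega⟩ : Fin n),
          (t ((i : ℕ) + 1) - t (i : ℕ)) ^ (x i)) * (y - t (n - 1)) ^ (x ⟨n - 1, by omega⟩) := by
  rw [← Finset.prod_erase_mul Finset.univ _ (Finset.mem_univ (⟨n - 1, by omega⟩ : Fin n))]
  congr 1
  · apply Finset.prod_congr rfl
    intro i hi
    have hi' : i ≠ (⟨n - 1, by omega⟩ : Fin n) := (Finset.mem_erase.mp hi).1
    have hne : (i : ℕ) ≠ n - 1 := by
      intro h; exact hi' (Fin.ext h)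
    have hlt : (i : ℕ) < n := i.isLt
    rw [Function.update_of_ne (by omega : (i : ℕ) + 1 ≠ n),
        Function.update_of_ne (by omega : (i : ℕ) ≠ n)]
  · have h1 : ((⟨n - 1, by omega⟩ : Fin n) : ℕ) = n - 1 := rfl
    rw [h1, (by omega : n - 1 + 1 = n), Function.update_self,
        Function.update_of_ne (by omega : n - 1 ≠ n)]

lemma sig_update {n : ℕ} (hn : 1 ≤ n) (α : ℕ → ℝ) (x' : Fin n → ℕ) :
    sig n α (Function.update x' (⟨n - 1, by omega⟩ : Fin n) (x' (⟨n - 1, by omega⟩ : Fin n) + 1))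
      = sig n α x' + α n := by
  set k0 : Fin n := ⟨n - 1, by omega⟩ with hk0
  have hsplit : ∀ z : Fin n → ℕ, sig n α z
      = α ((k0 : ℕ) + 1) * (z k0 : ℝ) + ∑ i ∈ Finset.univ.erase k0, α ((i : ℕ) + 1) * (z i : ℝ) := by
    intro z
    rw [sig, ← Finset.add_sum_erase Finset.univ _ (Finset.mem_univ k0)]
  rw [hsplit, hsplit]
  have herase : ∑ i ∈ Finset.univ.erase k0,
      α ((i : ℕ) + 1) * ((Function.update x' k0 (x' k0 + 1)) i : ℝ)
      = ∑ i ∈ Finset.univ.erase k0, α ((i : ℕ) + 1) * (x' i : ℝ) := by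
    apply Finset.sum_congr rfl
    intro i hi
    rw [Function.update_of_ne (Finset.mem_erase.mp hi).1]
  rw [herase, Function.update_self]
  have hk : (k0 : ℕ) + 1 = n := by
    have : (k0 : ℕ) = n - 1 := rfl
    omega
  rw [hk]
  push_cast
  ring

lemma fT_hasDerivAt {n : ℕ} (hn : 1 ≤ n) (t α : ℕ → ℝ) {l : ℝ} (hl : 0 < l)
    (m r : ℕ) (y : ℝ) :
    HasDerivAt (fun y => fT n t α l m r y) (dT n t α l m r y) y := by
  classical
  set k0 : Fin n := ⟨n - 1, by omega⟩ with hk0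
  set b : ℝ := t (n - 1) with hb
  -- rewrite fT as a polynomial in (y - b)
  have hfun : (fun y => fT n t α l m r y) = fun z => ((-1 : ℝ) ^ r / (r.factorial : ℝ)) *
      ∑ x ∈ Finset.Nat.antidiagonalTuple n r,
        (((r.factorial : ℝ) / ∏ i : Fin n, ((x i).factorial : ℝ)) *
          l ^ (sig n α x) * fallingFactorial (sig n α x) m *
          ∏ i ∈ Finset.univ.erase k0, (t ((i : ℕ) + 1) - t (i : ℕ)) ^ (x i)) *
          (z - b) ^ (x k0) := by
    funext z
    rw [fT]
    congr 1
    apply Finset.sum_congr rfl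
    intro x _
    rw [prod_update_eq hn t z x]
    ring
  rw [hfun]
  have key : HasDerivAt (fun z => ((-1 : ℝ) ^ r / (r.factorial : ℝ)) *
      ∑ x ∈ Finset.Nat.antidiagonalTuple n r,
        (((r.factorial : ℝ) / ∏ i : Fin n, ((x i).factorial : ℝ)) *
          l ^ (sig n α x) * fallingFactorial (sig n α x) m *
          ∏ i ∈ Finset.univ.erase k0, (t ((i : ℕ) + 1) - t (i : ℕ)) ^ (x i)) *
          (z - b) ^ (x k0))
      (((-1 : ℝ) ^ r / (r.factorial : ℝ)) *
      ∑ x ∈ Finset.Nat.antidiagonalTuple n r,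
        (((r.factorial : ℝ) / ∏ i : Fin n, ((x i).factorial : ℝ)) *
          l ^ (sig n α x) * fallingFactorial (sig n α x) m *
          ∏ i ∈ Finset.univ.erase k0, (t ((i : ℕ) + 1) - t (i : ℕ)) ^ (x i)) *
          ((x k0 : ℝ) * (y - b) ^ (x k0 - 1) * 1)) y := by
    apply HasDerivAt.const_mul
    apply HasDerivAt.fun_sum
    intro x _
    exact ((((hasDerivAt_id y).sub_const b).pow (x k0))).const_mul _
  have hval : ((-1 : ℝ) ^ r / (r.factorial : ℝ)) *
      ∑ x ∈ Finset.Nat.antidiagonalTuple n r,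
        (((r.factorial : ℝ) / ∏ i : Fin n, ((x i).factorial : ℝ)) *
          l ^ (sig n α x) * fallingFactorial (sig n α x) m *
          ∏ i ∈ Finset.univ.erase k0, (t ((i : ℕ) + 1) - t (i : ℕ)) ^ (x i)) *
          ((x k0 : ℝ) * (y - b) ^ (x k0 - 1) * 1)
      = dT n t α l m r y := by
    rcases r with _ | r
    · rw [Finset.Nat.antidiagonalTuple_zero_right, Finset.sum_singleton]
      show _ = (0:ℝ)
      norm_num
    · show _ = -(l ^ α n) * gT n t α l m r y
      have hgT : gT n t α l m r y = ((-1:ℝ)^r / (r.factorial:ℝ)) *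
          ∑ x' ∈ Finset.Nat.antidiagonalTuple n r,
            ((r.factorial:ℝ) / ∏ i : Fin n, ((x' i).factorial:ℝ)) * l ^ sig n α x' *
              fallingFactorial (sig n α x' + α n) m *
              ((∏ i ∈ Finset.univ.erase k0, (t ((i:ℕ)+1) - t (i:ℕ)) ^ (x' i)) *
                (y - b) ^ (x' k0)) := by
        rw [gT]
        congr 1
        apply Finset.sum_congr rfl
        intro x _
        rw [prod_update_eq hn t y x]
      have hside : ∀ x ∈ Finset.Nat.antidiagonalTuple n (r+1),
          (((r+1).factorial : ℝ) / ∏ i : Fin n, ((x i).factorial : ℝ)) *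
            l ^ (sig n α x) * fallingFactorial (sig n α x) m *
            (∏ i ∈ Finset.univ.erase k0, (t ((i : ℕ) + 1) - t (i : ℕ)) ^ (x i)) *
            ((x k0 : ℝ) * (y - b) ^ (x k0 - 1) * 1) ≠ 0 → x k0 ≠ 0 := by
        intro x _ hne h0
        apply hne
        rw [h0]
        norm_num
      have hstep : ∑ x ∈ Finset.Nat.antidiagonalTuple n (r+1),
          (((r+1).factorial : ℝ) / ∏ i : Fin n, ((x i).factorial : ℝ)) *
            l ^ (sig n α x) * fallingFactorial (sig n α x) m *
            (∏ i ∈ Finset.univ.erase k0, (t ((i : ℕ) + 1) - t (i : ℕ)) ^ (x i)) *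
            ((x k0 : ℝ) * (y - b) ^ (x k0 - 1) * 1)
          = ∑ x' ∈ Finset.Nat.antidiagonalTuple n r,
            (((r:ℝ)+1) * l ^ α n) *
              (((r.factorial:ℝ) / ∏ i : Fin n, ((x' i).factorial:ℝ)) * l ^ sig n α x' *
                fallingFactorial (sig n α x' + α n) m *
                ((∏ i ∈ Finset.univ.erase k0, (t ((i:ℕ)+1) - t (i:ℕ)) ^ (x' i)) *
                  (y - b) ^ (x' k0))) := by
        rw [← Finset.sum_filter_of_ne hside]
        refine Finset.sum_bij' (fun x _ => Function.update x k0 (x k0 - 1))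
          (fun x' _ => Function.update x' k0 (x' k0 + 1)) ?_ ?_ ?_ ?_ ?_
        · -- hi
          intro x hx
          obtain ⟨hx1, hx2⟩ := Finset.mem_filter.mp hx
          have hsum := Finset.Nat.mem_antidiagonalTuple.mp hx1
          rw [Finset.Nat.mem_antidiagonalTuple, Finset.sum_update_of_mem (Finset.mem_univ k0), Finset.sdiff_singleton_eq_erase]
          have h2 : x k0 + ∑ i ∈ Finset.univ.erase k0, x i = r + 1 := by
            rw [Finset.add_sum_erase _ _ (Finset.mem_univ k0)]
            exact hsum
          omega
        · -- hj
          intro x' hx'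
          have hsum := Finset.Nat.mem_antidiagonalTuple.mp hx'
          rw [Finset.mem_filter]
          constructor
          · rw [Finset.Nat.mem_antidiagonalTuple, Finset.sum_update_of_mem (Finset.mem_univ k0), Finset.sdiff_singleton_eq_erase]
            have h2 : x' k0 + ∑ i ∈ Finset.univ.erase k0, x' i = r := by
              rw [Finset.add_sum_erase _ _ (Finset.mem_univ k0)]
              exact hsum
            omega
          · simp
        · -- left_inv
          intro x hx
          obtain ⟨_, hx2⟩ := Finset.mem_filter.mp hx
          simp only [Function.update_self, Function.update_idem]
          rw [Nat.sub_add_cancel (Nat.one_le_iff_ne_zero.mpr hx2), Function.update_eq_self]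
        · -- right_inv
          intro x' _
          simp only [Function.update_self, Function.update_idem]
          rw [Nat.add_sub_cancel, Function.update_eq_self]
        · -- term equality
          intro x hx
          obtain ⟨hx1, hx2⟩ := Finset.mem_filter.mp hx
          obtain ⟨e, he⟩ : ∃ e, x k0 = e + 1 := ⟨x k0 - 1, by omega⟩
          have hx'k0 : Function.update x k0 (x k0 - 1) k0 = e := by
            rw [Function.update_self, he, Nat.add_sub_cancel]
          have hxx : Function.update (Function.update x k0 (x k0 - 1)) k0
              (Function.update x k0 (x k0 - 1) k0 + 1) = x := by
            simp only [Function.update_self, Function.update_idem]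
            rw [he, Nat.add_sub_cancel, ← he, Function.update_eq_self]
          have hsig : sig n α (Function.update x k0 (x k0 - 1)) + α n = sig n α x := by
            have h := sig_update hn α (Function.update x k0 (x k0 - 1))
            rw [show (⟨n - 1, by omega⟩ : Fin n) = k0 from rfl] at h
            rw [← h, hxx]
          have hprodT : ∏ i ∈ Finset.univ.erase k0, (t ((i:ℕ)+1) - t (i:ℕ)) ^
              (Function.update x k0 (x k0 - 1) i)
              = ∏ i ∈ Finset.univ.erase k0, (t ((i:ℕ)+1) - t (i:ℕ)) ^ (x i) := by
            apply Finset.prod_congr rfl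
            intro i hi
            rw [Function.update_of_ne (Finset.mem_erase.mp hi).1]
          have hprodF : ∀ z : Fin n → ℕ, ∏ i : Fin n, ((z i).factorial : ℝ)
              = (∏ i ∈ Finset.univ.erase k0, ((z i).factorial : ℝ)) * ((z k0).factorial : ℝ) :=
            fun z => (Finset.prod_erase_mul Finset.univ _ (Finset.mem_univ k0)).symm
          have hprodF' : ∏ i ∈ Finset.univ.erase k0,
              ((Function.update x k0 (x k0 - 1) i).factorial : ℝ)
              = ∏ i ∈ Finset.univ.erase k0, ((x i).factorial : ℝ) := by
            apply Finset.prod_congr rfl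
            intro i hi
            rw [Function.update_of_ne (Finset.mem_erase.mp hi).1]
          have hQpos : (0:ℝ) < ∏ i ∈ Finset.univ.erase k0, ((x i).factorial : ℝ) := by
            apply Finset.prod_pos
            intro i _
            exact_mod_cast Nat.factorial_pos _
          rw [← hsig, Real.rpow_add hl, hprodF, hprodF, hprodF', hprodT, hx'k0, he]
          rw [Nat.add_sub_cancel, Nat.factorial_succ (e), Nat.factorial_succ r]
          push_cast
          field_simp
      rw [hstep, ← Finset.mul_sum, hgT, Nat.factorial_succ]
      push_cast
      field_simp
      ring
  rw [← hval]
  exact key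

noncomputable def Cst (n : ℕ) (t : ℕ → ℝ) (α : ℕ → ℝ) (l : ℝ) : ℝ :=
  ∑ i : Fin n, l ^ (α ((i : ℕ) + 1)) * |t ((i : ℕ) + 1) - t (i : ℕ)|

lemma rpow_split {n : ℕ} {l : ℝ} (hl : 0 < l) (a d : Fin n → ℝ) (x : Fin n → ℕ) :
    l ^ (∑ i : Fin n, a i * (x i : ℝ)) * ∏ i : Fin n, d i ^ x i
      = ∏ i : Fin n, (l ^ a i * d i) ^ x i := by
  have h1 : ∏ i : Fin n, (l ^ a i * d i) ^ x i
      = (∏ i : Fin n, (l ^ a i) ^ x i) * ∏ i : Fin n, d i ^ x i := by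
    rw [← Finset.prod_mul_distrib]
    apply Finset.prod_congr rfl
    intro i _
    rw [mul_pow]
  rw [h1]
  congr 1
  rw [Real.rpow_def_of_pos hl, Finset.mul_sum, Real.exp_sum]
  apply Finset.prod_congr rfl
  intro i _
  rw [Real.rpow_def_of_pos hl, ← Real.exp_nat_mul]
  congr 1
  ring

lemma sig_nonneg {n : ℕ} {α : ℕ → ℝ} (hα : ∀ k, 1 ≤ k → k ≤ n → α k ∈ Set.Ioo (0:ℝ) 1)
    (x : Fin n → ℕ) : 0 ≤ sig n α x := by
  apply Finset.sum_nonneg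
  intro i _
  have h := hα ((i : ℕ) + 1) (by omega) (by have := i.isLt; omega)
  exact mul_nonneg (le_of_lt h.1) (Nat.cast_nonneg _)

lemma sig_le {n : ℕ} {α : ℕ → ℝ} (hα : ∀ k, 1 ≤ k → k ≤ n → α k ∈ Set.Ioo (0:ℝ) 1)
    {r : ℕ} {x : Fin n → ℕ} (hx : x ∈ Finset.Nat.antidiagonalTuple n r) :
    sig n α x ≤ r := by
  have hs := Finset.Nat.mem_antidiagonalTuple.mp hx
  calc sig n α x ≤ ∑ i : Fin n, (x i : ℝ) := by
        apply Finset.sum_le_sum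
        intro i _
        have h := hα ((i : ℕ) + 1) (by omega) (by have := i.isLt; omega)
        calc α ((i : ℕ) + 1) * (x i : ℝ) ≤ 1 * (x i : ℝ) :=
              mul_le_mul_of_nonneg_right (le_of_lt h.2) (Nat.cast_nonneg _)
          _ = (x i : ℝ) := one_mul _
    _ = r := by exact_mod_cast congrArg (Nat.cast : ℕ → ℝ) hs

lemma abs_c_le {n : ℕ} (hn : 1 ≤ n) (t : ℕ → ℝ) (α : ℕ → ℝ) {l : ℝ} (hl : 0 < l)
    {y : ℝ} (hy : |y - t (n - 1)| ≤ |t n - t (n - 1)|) (i : Fin n) :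
    |l ^ (α ((i : ℕ) + 1)) * (Function.update t n y ((i : ℕ) + 1) - Function.update t n y (i : ℕ))|
      ≤ l ^ (α ((i : ℕ) + 1)) * |t ((i : ℕ) + 1) - t (i : ℕ)| := by
  have hlp : 0 < l ^ (α ((i : ℕ) + 1)) := Real.rpow_pos_of_pos hl _
  rw [abs_mul, abs_of_pos hlp]
  apply mul_le_mul_of_nonneg_left _ (le_of_lt hlp)
  by_cases hik : (i : ℕ) = n - 1
  · rw [hik, (by omega : n - 1 + 1 = n), Function.update_self,
      Function.update_of_ne (by omega : n - 1 ≠ n)]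
    exact hy
  · have hlt : (i : ℕ) < n := i.isLt
    rw [Function.update_of_ne (by omega : (i : ℕ) + 1 ≠ n),
      Function.update_of_ne (by omega : (i : ℕ) ≠ n)]

lemma fT_bound {n : ℕ} (hn : 1 ≤ n) (t : ℕ → ℝ) {α : ℕ → ℝ} {l : ℝ} (hl : 0 < l)
    (hα : ∀ k, 1 ≤ k → k ≤ n → α k ∈ Set.Ioo (0:ℝ) 1) (m r : ℕ) {y : ℝ}
    (hy : |y - t (n - 1)| ≤ |t n - t (n - 1)|) :
    |fT n t α l m r y| ≤ ((r : ℝ) + m) ^ m * (Cst n t α l) ^ r / r.factorial := by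
  rw [fT, abs_mul, abs_div, abs_pow, abs_neg, abs_one, one_pow]
  rw [abs_of_nonneg (Nat.cast_nonneg r.factorial : (0:ℝ) ≤ (r.factorial : ℝ))]
  have hsum : ∑ x ∈ Finset.Nat.antidiagonalTuple n r,
      ((r.factorial : ℝ) / ∏ i : Fin n, ((x i).factorial : ℝ)) *
        l ^ (sig n α x) * fallingFactorial (sig n α x) m *
        ∏ i : Fin n, (Function.update t n y ((i : ℕ) + 1) - Function.update t n y (i : ℕ)) ^ (x i)
      = ∑ x ∈ Finset.Nat.antidiagonalTuple n r,
      ((r.factorial : ℝ) / ∏ i : Fin n, ((x i).factorial : ℝ)) *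
        (∏ i : Fin n, (l ^ (α ((i : ℕ) + 1)) *
          (Function.update t n y ((i : ℕ) + 1) - Function.update t n y (i : ℕ))) ^ x i) *
        fallingFactorial (sig n α x) m := by
    apply Finset.sum_congr rfl
    intro x _
    rw [← rpow_split hl (fun i => α ((i : ℕ) + 1))
      (fun i => Function.update t n y ((i : ℕ) + 1) - Function.update t n y (i : ℕ)) x]
    rw [sig]
    ring
  rw [hsum]
  have hb := sum_bound (n := n) (r := r)
    (fun i => l ^ (α ((i : ℕ) + 1)) * (Function.update t n y ((i : ℕ) + 1) - Function.update t n y (i : ℕ)))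
    (fun i => l ^ (α ((i : ℕ) + 1)) * |t ((i : ℕ) + 1) - t (i : ℕ)|)
    (fun i => abs_c_le hn t α hl hy i)
    (fun x => fallingFactorial (sig n α x) m) (((r : ℝ) + m) ^ m) (by positivity) ?_
  · calc (1 / (r.factorial : ℝ)) * |∑ x ∈ Finset.Nat.antidiagonalTuple n r, _| ≤
        (1 / (r.factorial : ℝ)) * (((r : ℝ) + m) ^ m * (Cst n t α l) ^ r) := by
          apply mul_le_mul_of_nonneg_left hb (by positivity)
      _ = ((r : ℝ) + m) ^ m * (Cst n t α l) ^ r / r.factorial := by ring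
  · intro x hx
    calc |fallingFactorial (sig n α x) m| ≤ (|sig n α x| + m) ^ m := ff_abs_le _ m
      _ ≤ ((r : ℝ) + m) ^ m := by
          have h1 : |sig n α x| ≤ (r : ℝ) := by
            rw [abs_of_nonneg (sig_nonneg hα x)]
            exact sig_le hα hx
          apply pow_le_pow_left₀ (by positivity)
          linarith

lemma gT_bound {n : ℕ} (hn : 1 ≤ n) (t : ℕ → ℝ) {α : ℕ → ℝ} {l : ℝ} (hl : 0 < l)
    (hα : ∀ k, 1 ≤ k → k ≤ n → α k ∈ Set.Ioo (0:ℝ) 1) (p r : ℕ) {y : ℝ}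
    (hy : |y - t (n - 1)| ≤ |t n - t (n - 1)|) :
    |gT n t α l p r y| ≤ ((r : ℝ) + (p + 1)) ^ p * (Cst n t α l) ^ r / r.factorial := by
  rw [gT, abs_mul, abs_div, abs_pow, abs_neg, abs_one, one_pow]
  rw [abs_of_nonneg (Nat.cast_nonneg r.factorial : (0:ℝ) ≤ (r.factorial : ℝ))]
  have hsum : ∑ x ∈ Finset.Nat.antidiagonalTuple n r,
      ((r.factorial : ℝ) / ∏ i : Fin n, ((x i).factorial : ℝ)) *
        l ^ (sig n α x) * fallingFactorial (sig n α x + α n) p *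
        ∏ i : Fin n, (Function.update t n y ((i : ℕ) + 1) - Function.update t n y (i : ℕ)) ^ (x i)
      = ∑ x ∈ Finset.Nat.antidiagonalTuple n r,
      ((r.factorial : ℝ) / ∏ i : Fin n, ((x i).factorial : ℝ)) *
        (∏ i : Fin n, (l ^ (α ((i : ℕ) + 1)) *
          (Function.update t n y ((i : ℕ) + 1) - Function.update t n y (i : ℕ))) ^ x i) *
        fallingFactorial (sig n α x + α n) p := by
    apply Finset.sum_congr rfl
    intro x _
    rw [← rpow_split hl (fun i => α ((i : ℕ) + 1))
      (fun i => Function.update t n y ((i : ℕ) + 1) - Function.update t n y (i : ℕ)) x]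
    rw [sig]
    ring
  rw [hsum]
  have hαn := hα n hn le_rfl
  have hb := sum_bound (n := n) (r := r)
    (fun i => l ^ (α ((i : ℕ) + 1)) * (Function.update t n y ((i : ℕ) + 1) - Function.update t n y (i : ℕ)))
    (fun i => l ^ (α ((i : ℕ) + 1)) * |t ((i : ℕ) + 1) - t (i : ℕ)|)
    (fun i => abs_c_le hn t α hl hy i)
    (fun x => fallingFactorial (sig n α x + α n) p) (((r : ℝ) + (p + 1)) ^ p) (by positivity) ?_
  · calc (1 / (r.factorial : ℝ)) * |∑ x ∈ Finset.Nat.antidiagonalTuple n r, _| ≤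
        (1 / (r.factorial : ℝ)) * (((r : ℝ) + (p + 1)) ^ p * (Cst n t α l) ^ r) := by
          apply mul_le_mul_of_nonneg_left hb (by positivity)
      _ = ((r : ℝ) + (p + 1)) ^ p * (Cst n t α l) ^ r / r.factorial := by ring
  · intro x hx
    calc |fallingFactorial (sig n α x + α n) p| ≤ (|sig n α x + α n| + p) ^ p := ff_abs_le _ p
      _ ≤ ((r : ℝ) + (p + 1)) ^ p := by
          have h1 : |sig n α x + α n| ≤ (r : ℝ) + 1 := by
            calc |sig n α x + α n| ≤ |sig n α x| + |α n| := abs_add_le _ _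
              _ ≤ (r : ℝ) + 1 := by
                  apply add_le_add
                  · rw [abs_of_nonneg (sig_nonneg hα x)]
                    exact sig_le hα hx
                  · rw [abs_of_pos hαn.1]
                    exact le_of_lt hαn.2
          apply pow_le_pow_left₀ (by positivity)
          linarith

lemma gT_vandermonde {n : ℕ} (t α : ℕ → ℝ) (l : ℝ) (m r : ℕ) (y : ℝ) :
    gT n t α l m r y = ∑ j ∈ Finset.range (m + 1),
      (m.choose j : ℝ) * fallingFactorial (α n) j * fT n t α l (m - j) r y := by
  have step1 : gT n t α l m r y = ((-1 : ℝ) ^ r / (r.factorial : ℝ)) *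
      ∑ x ∈ Finset.Nat.antidiagonalTuple n r, ∑ j ∈ Finset.range (m + 1),
        ((m.choose j : ℝ) * fallingFactorial (α n) j) *
          (((r.factorial : ℝ) / ∏ i : Fin n, ((x i).factorial : ℝ)) *
            l ^ (sig n α x) * fallingFactorial (sig n α x) (m - j) *
            ∏ i : Fin n, (Function.update t n y ((i : ℕ) + 1) - Function.update t n y (i : ℕ)) ^ (x i)) := by
    rw [gT]
    congr 1
    apply Finset.sum_congr rfl
    intro x _
    rw [show sig n α x + α n = α n + sig n α x from add_comm _ _, ff_add (α n) (sig n α x) m]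
    rw [Finset.mul_sum, Finset.sum_mul]
    apply Finset.sum_congr rfl
    intro j _
    ring
  rw [step1, Finset.sum_comm, Finset.mul_sum]
  apply Finset.sum_congr rfl
  intro j _
  rw [fT, ← Finset.mul_sum]
  ring

lemma coeff_id {m j : ℕ} (h : j ≤ m) :
    ((-1 : ℝ) ^ m / (m.factorial : ℝ)) * (m.choose j : ℝ)
      = ((-1 : ℝ) ^ j / (j.factorial : ℝ)) * ((-1 : ℝ) ^ (m - j) / ((m - j).factorial : ℝ)) := by
  have hc : ((m.choose j : ℕ) : ℝ) * (j.factorial : ℝ) * ((m - j).factorial : ℝ)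
      = (m.factorial : ℝ) := by
    exact_mod_cast congrArg (Nat.cast : ℕ → ℝ) (Nat.choose_mul_factorial_mul_factorial h)
  have hsign : (-1 : ℝ) ^ j * (-1 : ℝ) ^ (m - j) = (-1 : ℝ) ^ m := by
    rw [← pow_add]
    congr 1
    omega
  have hfm : (m.factorial : ℝ) ≠ 0 := Nat.cast_ne_zero.mpr (Nat.factorial_ne_zero _)
  have hfj : (j.factorial : ℝ) ≠ 0 := Nat.cast_ne_zero.mpr (Nat.factorial_ne_zero _)
  have hfmj : ((m - j).factorial : ℝ) ≠ 0 := Nat.cast_ne_zero.mpr (Nat.factorial_ne_zero _)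
  field_simp
  rw [← hc, ← hsign]
  ring

end GsfppAux

/-- for `t ∈ (t_{n−1}, t_n)` let `a_m(t)` be the pmf coefficient computed
for the partition `0 = t_0 < t_1 < ⋯ < t_{n−1} < t` (that is, with `t_n` replaced by `t`).
Then `t ↦ a_m(t)` is differentiable on `(t_{n−1}, t_n)` and satisfies
`d/dt a_m(t) = −λ^{α_n} ∑_{r=0}^m ((−1)^r/r!) (Γ(α_n+1)/Γ(α_n+1−r)) a_{m−r}(t)`. -/
theorem gsfppvo_pmf_fractional_ode
    (n : ℕ) (hn : 1 ≤ n) (t : ℕ → ℝ)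
    (ht0 : t 0 = 0) (htmono : ∀ k < n, t k < t (k + 1))
    (α : ℕ → ℝ) (hα : ∀ k, 1 ≤ k → k ≤ n → α k ∈ Set.Ioo (0 : ℝ) 1)
    (l : ℝ) (hl : 0 < l) :
    ∀ m : ℕ, ∀ x ∈ Set.Ioo (t (n - 1)) (t n),
      HasDerivAt (fun y : ℝ => gsfppPmf n (Function.update t n y) α l m)
        (-(l ^ α n) * ∑ r ∈ Finset.range (m + 1),
          ((-1 : ℝ) ^ r / (r.factorial : ℝ)) *
            (Real.Gamma (α n + 1) / Real.Gamma (α n + 1 - r)) *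
            gsfppPmf n (Function.update t n x) α l (m - r)) x := by
  intro m x hx
  open GsfppAux in
  have hbn : t (n - 1) < t n := by
    have h := htmono (n - 1) (by omega)
    rwa [(by omega : n - 1 + 1 = n)] at h
  have hyabs : ∀ y ∈ Set.Ioo (t (n - 1)) (t n), |y - t (n - 1)| ≤ |t n - t (n - 1)| := by
    intro y hy
    rw [abs_of_pos (by linarith [hy.1] : (0:ℝ) < y - t (n - 1)),
        abs_of_pos (by linarith : (0:ℝ) < t n - t (n - 1))]
    linarith [hy.2]
  have hC : 0 ≤ Cst n t α l :=
    Finset.sum_nonneg fun i _ => mul_nonneg (Real.rpow_pos_of_pos hl _).le (abs_nonneg _)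
  have hαn := hα n hn le_rfl
  have hlp : (0:ℝ) < l ^ α n := Real.rpow_pos_of_pos hl _
  -- summability of fT
  have hsumf : ∀ p : ℕ, ∀ y ∈ Set.Ioo (t (n - 1)) (t n), Summable (fun r => fT n t α l p r y) := by
    intro p y hy
    apply Summable.of_norm
    apply Summable.of_nonneg_of_le (fun r => norm_nonneg _) (fun r => ?_)
      (summable_master p (p : ℝ) (Cst n t α l) (Nat.cast_nonneg p) hC)
    rw [Real.norm_eq_abs]
    exact fT_bound hn t hl hα p r (hyabs y hy)
  -- uniform bound for dT
  set u : ℕ → ℝ := fun r => Nat.casesOn r 0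
    (fun r' => l ^ α n * (((r' : ℝ) + ((m : ℝ) + 1)) ^ m * (Cst n t α l) ^ r' / r'.factorial))
    with hu_def
  have hu_b : ∀ (r : ℕ), ∀ y ∈ Set.Ioo (t (n - 1)) (t n), ‖dT n t α l m r y‖ ≤ u r := by
    intro r y hy
    cases r with
    | zero =>
      show ‖(0:ℝ)‖ ≤ (0:ℝ)
      simp
    | succ r' =>
      show ‖-(l ^ α n) * gT n t α l m r' y‖ ≤ _
      rw [Real.norm_eq_abs, abs_mul, abs_neg, abs_of_pos hlp]
      exact mul_le_mul_of_nonneg_left (gT_bound hn t hl hα m r' (hyabs y hy)) hlp.le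
  have hu_sum : Summable u := by
    rw [← summable_nat_add_iff 1]
    apply Summable.congr ((Summable.mul_left (l ^ α n)
      (summable_master m ((m : ℝ) + 1) (Cst n t α l) (by positivity) hC)))
    intro r
    rfl
  -- derivative of the series
  have hder : HasDerivAt (fun y => ∑' r, fT n t α l m r y) (∑' r, dT n t α l m r x) x := by
    apply hasDerivAt_of_tendstoUniformlyOn isOpen_Ioo
      (tendstoUniformlyOn_tsum_nat hu_sum (fun r y hy => hu_b r y hy))
      (Filter.Eventually.of_forall
        (fun N y _ => HasDerivAt.fun_sum (fun r _ => fT_hasDerivAt hn t α hl m r y)))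
      (fun y hy => ((hsumf m y hy).hasSum.tendsto_sum_nat))
      hx
  have heq : (fun y : ℝ => gsfppPmf n (Function.update t n y) α l m)
      = fun y => ((-1 : ℝ) ^ m / (m.factorial : ℝ)) * ∑' r, fT n t α l m r y :=
    funext fun y => gsfpp_eq n t α l m y
  rw [heq]
  have hD := hder.const_mul (((-1 : ℝ) ^ m / (m.factorial : ℝ)))
  suffices hval : ((-1 : ℝ) ^ m / (m.factorial : ℝ)) * (∑' r, dT n t α l m r x)
      = -(l ^ α n) * ∑ r ∈ Finset.range (m + 1),
          ((-1 : ℝ) ^ r / (r.factorial : ℝ)) *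
            (Real.Gamma (α n + 1) / Real.Gamma (α n + 1 - r)) *
            gsfppPmf n (Function.update t n x) α l (m - r) by
    rw [← hval]
    exact hD
  -- compute the tsum of dT
  have hsum_dT : Summable (fun r => dT n t α l m r x) := by
    apply Summable.of_norm
    exact Summable.of_nonneg_of_le (fun r => norm_nonneg _) (fun r => hu_b r x hx) hu_sum
  have h0 : ∑' r, dT n t α l m r x = ∑' r, dT n t α l m (r + 1) x := by
    rw [Summable.tsum_eq_zero_add hsum_dT]
    show (0:ℝ) + _ = _
    rw [zero_add]
  have h1 : ∀ r : ℕ, dT n t α l m (r + 1) x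
      = ∑ j ∈ Finset.range (m + 1),
          (-(l ^ α n) * ((m.choose j : ℝ) * fallingFactorial (α n) j)) * fT n t α l (m - j) r x := by
    intro r
    show -(l ^ α n) * gT n t α l m r x = _
    rw [gT_vandermonde t α l m r x, Finset.mul_sum]
    apply Finset.sum_congr rfl
    intro j _
    ring
  have h2 : ∑' r, dT n t α l m (r + 1) x
      = ∑ j ∈ Finset.range (m + 1),
          (-(l ^ α n) * ((m.choose j : ℝ) * fallingFactorial (α n) j)) *
            ∑' r, fT n t α l (m - j) r x := by
    rw [tsum_congr h1, Summable.tsum_finsetSum]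
    · apply Finset.sum_congr rfl
      intro j _
      rw [tsum_mul_left]
    · intro j _
      exact (hsumf (m - j) x hx).mul_left _
  rw [h0, h2, Finset.mul_sum, Finset.mul_sum]
  apply Finset.sum_congr rfl
  intro j hj
  have hjm : j ≤ m := Nat.lt_succ_iff.mp (Finset.mem_range.mp hj)
  rw [gamma_ratio hαn j, gsfpp_eq n t α l (m - j) x]
  have hcoeff := coeff_id (m := m) (j := j) hjm
  linear_combination (-(l ^ α n) * fallingFactorial (α n) j * (∑' r, fT n t α l (m - j) r x)) * hcoeff
end
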